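/- arXiv:2404.02266 — 2 statements merged into one kernel-verified Lean document; each statement's English description precedes it below -/
import Mathlib

section
/- Suppose min_k(s_{k+1}−s_k) ≥ t^{γ0} and fix 0 < β < γ < γ0. Define E_exp as the event that a(1,r)(1 − 1/log r) ≤ #E(r) ≤ a(1,r)(1 + 1/log r) simultaneously for all integers (log t)^{2/(1−β)} ≤ r ≤ t, and E_diff = ∩_{k=1}^{M−1} { L_{k+1} − U_k ≥ t^{γ−β}/2 }. Then there exists a constant C > 0 such that for all sufficiently large t, P(E_exp ∩ E_diff) ≥ 1 − exp(−(log t)^{3/2}) − t·exp(−C·t^{γ−β}). -/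
open MeasureTheory ProbabilityTheory Finset Real
open scoped ProbabilityTheory

set_option linter.unusedSectionVars false
set_option maxHeartbeats 2000000

/-- `#E(r)`, the number of sampling times among `{1, …, r}`. -/
def sampCount {Ω : Type*} (Z : ℕ → Ω → ℕ) (r : ℕ) (ω : Ω) : ℕ :=
  ((Finset.Icc 1 r).filter (fun j => Z j ω = 1)).card

/-- `T(l)`, the `l`-th smallest sampling time in `E(t)` (for `1 ≤ l ≤ #E(t)`). -/
def Tidx {Ω : Type*} (Z : ℕ → Ω → ℕ) (t : ℕ) (l : ℕ) (ω : Ω) : ℕ :=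
  (((Finset.Icc 1 t).filter (fun j => Z j ω = 1)).sort (· ≤ ·)).getD (l - 1) 0

/-- `L_k`: the smallest index `l` with `T(l) ≥ s_k + t^γ`. -/
noncomputable def Lidx {Ω : Type*} (Z : ℕ → Ω → ℕ) (s : ℕ → ℕ) (t : ℕ) (γ : ℝ)
    (k : ℕ) (ω : Ω) : ℕ :=
  sInf {l : ℕ | 1 ≤ l ∧ l ≤ sampCount Z t ω ∧
    (s k : ℝ) + (t : ℝ) ^ γ ≤ (Tidx Z t l ω : ℝ)}

/-- `U_k`: the largest index `l` with `T(l) ≤ s_{k+1} − 1`. -/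
noncomputable def Uidx {Ω : Type*} (Z : ℕ → Ω → ℕ) (s : ℕ → ℕ) (t : ℕ)
    (k : ℕ) (ω : Ω) : ℕ :=
  sSup {l : ℕ | 1 ≤ l ∧ l ≤ sampCount Z t ω ∧ Tidx Z t l ω ≤ s (k + 1) - 1}

section AuxLemmas

lemma exp_quad {x : ℝ} (hx : |x| ≤ 1) : Real.exp x ≤ 1 + x + x ^ 2 := by
  have h := Real.exp_bound hx (n := 2) (by norm_num)
  have h2 : |Real.exp x - (1 + x)| ≤ |x| ^ 2 * (3 / (2 * 2)) := by
    simpa [Finset.sum_range_succ, Nat.factorial] using h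
  have h3 : |x| ^ 2 = x ^ 2 := sq_abs x
  have := abs_le.mp h2
  nlinarith [sq_nonneg x]

lemma aux_X1 {c : ℝ} (hc : 0 < c) :
    ∃ X1 : ℝ, 3 ≤ X1 ∧ ∀ u : ℝ, X1 ≤ u → 4 * (Real.log u) ^ 2 ≤ u ^ c := by
  set ε := c / 4 with hε
  have hε0 : 0 < ε := by positivity
  refine ⟨max 3 ((4 / ε ^ 2 + 1) ^ (2 * ε)⁻¹), le_max_left _ _, fun u hu => ?_⟩
  have hu3 : 3 ≤ u := (le_max_left _ _).trans hu
  have hu1 : 1 ≤ u := by linarith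
  have hu0 : 0 < u := by linarith
  have hlog : Real.log u ≤ u ^ ε / ε := Real.log_le_rpow_div hu0.le hε0
  have hlog0 : 0 ≤ Real.log u := Real.log_nonneg hu1
  have h2 : (Real.log u) ^ 2 ≤ (u ^ ε / ε) ^ 2 := by
    apply pow_le_pow_left₀ hlog0 hlog
  have hpow : (u ^ ε) ^ 2 = u ^ (2 * ε) := by
    rw [← Real.rpow_natCast (u ^ ε) 2, ← Real.rpow_mul hu0.le]
    ring_nf
  have hbase0 : (0:ℝ) ≤ 4 / ε ^ 2 + 1 := by positivity
  have hKey : 4 / ε ^ 2 ≤ u ^ (2 * ε) := by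
    have h1 : ((4 / ε ^ 2 + 1) ^ (2 * ε)⁻¹ : ℝ) ≤ u := (le_max_right _ _).trans hu
    have h2' : ((4 / ε ^ 2 + 1) ^ (2 * ε)⁻¹ : ℝ) ^ (2 * ε) ≤ u ^ (2 * ε) :=
      Real.rpow_le_rpow (Real.rpow_nonneg hbase0 _) h1 (by positivity)
    rw [Real.rpow_inv_rpow hbase0 (by positivity)] at h2'
    linarith
  have hsplit : u ^ c = u ^ (2 * ε) * u ^ (2 * ε) := by
    rw [← Real.rpow_add hu0]
    congr 1
    rw [hε]; ring
  calc 4 * (Real.log u) ^ 2 ≤ 4 * (u ^ ε / ε) ^ 2 := by linarith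
    _ = (4 / ε ^ 2) * u ^ (2 * ε) := by
        rw [div_pow, hpow]; ring
    _ ≤ u ^ (2 * ε) * u ^ (2 * ε) := by
        apply mul_le_mul_of_nonneg_right hKey (Real.rpow_nonneg hu0.le _)
    _ = u ^ c := hsplit.symm

lemma aux_E2 {L : ℝ} (hL : 256 ≤ L) :
    L ^ ((3:ℝ)/2) + L + Real.log 4 ≤ L ^ ((7:ℝ)/4) := by
  have hL0 : 0 < L := by linarith
  have hL1 : 1 ≤ L := by linarith
  have hsplit : L ^ ((7:ℝ)/4) = L ^ ((3:ℝ)/2) * L ^ ((1:ℝ)/4) := by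
    rw [← Real.rpow_add hL0]; norm_num
  have hq : (4:ℝ) ≤ L ^ ((1:ℝ)/4) := by
    have h256 : ((256:ℝ)) ^ ((1:ℝ)/4) = 4 := by
      rw [show (256:ℝ) = (4:ℝ) ^ (4:ℕ) by norm_num, ← Real.rpow_natCast (4:ℝ) 4,
        ← Real.rpow_mul (by norm_num)]
      norm_num
    have h' : ((256:ℝ)) ^ ((1:ℝ)/4) ≤ L ^ ((1:ℝ)/4) :=
      Real.rpow_le_rpow (by norm_num) hL (by norm_num)
    rwa [h256] at h'
  have h32 : L ≤ L ^ ((3:ℝ)/2) := by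
    nth_rewrite 1 [← Real.rpow_one L]
    exact Real.rpow_le_rpow_of_exponent_le hL1 (by norm_num)
  have hlog4 : Real.log 4 ≤ 3 := by
    have := Real.log_le_sub_one_of_pos (show (0:ℝ) < 4 by norm_num)
    linarith
  have h1 : L ^ ((3:ℝ)/2) * L ^ ((1:ℝ)/4) ≥ 4 * L ^ ((3:ℝ)/2) := by
    have h0 : 0 ≤ L ^ ((3:ℝ)/2) := Real.rpow_nonneg hL0.le _
    nlinarith
  rw [hsplit]
  nlinarith [h32, hlog4, hL]

lemma aux_sum_lb {β : ℝ} (hβ : 0 < β) (r : ℕ) (hr : 1 ≤ r) :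
    (r : ℝ) ^ (1 - β) ≤ ∑ j ∈ Finset.Icc 1 r, (j : ℝ) ^ (-β) := by
  have hr0 : (0:ℝ) < r := by exact_mod_cast hr
  calc (r : ℝ) ^ (1 - β) = (r : ℝ) * (r : ℝ) ^ (-β) := by
        rw [show (1:ℝ) - β = 1 + (-β) by ring, Real.rpow_add hr0, Real.rpow_one]
    _ = ∑ _j ∈ Finset.Icc 1 r, (r : ℝ) ^ (-β) := by
        rw [Finset.sum_const, Nat.card_Icc]
        simp
    _ ≤ ∑ j ∈ Finset.Icc 1 r, (j : ℝ) ^ (-β) := by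
        refine Finset.sum_le_sum fun j hj => ?_
        rw [Finset.mem_Icc] at hj
        refine Real.rpow_le_rpow_of_nonpos ?_ ?_ (by linarith)
        · exact_mod_cast hj.1
        · exact_mod_cast hj.2

end AuxLemmas

section ProbLemmas

variable {Ω : Type} [MeasureSpace Ω] [IsProbabilityMeasure (ℙ : Measure Ω)]

lemma sampCount_cast (Z : ℕ → Ω → ℕ) (h01 : ∀ j ω, Z j ω = 0 ∨ Z j ω = 1) (r : ℕ) (ω : Ω) :
    ((sampCount Z r ω : ℝ)) = ∑ j ∈ Finset.Icc 1 r, (Z j ω : ℝ) := by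
  rw [sampCount, Finset.card_filter]
  push_cast
  refine Finset.sum_congr rfl fun j _ => ?_
  rcases h01 j ω with h | h <;> simp [h]

lemma exp_eq_indicator (Z : ℕ → Ω → ℕ) (h01 : ∀ j ω, Z j ω = 0 ∨ Z j ω = 1) (j : ℕ) (θ : ℝ)
    (ω : Ω) :
    Real.exp (θ * (Z j ω : ℝ))
      = 1 + (Real.exp θ - 1) * ({ω | Z j ω = 1}.indicator (fun _ => (1 : ℝ)) ω) := by
  rcases h01 j ω with h | h
  · have : ω ∉ {ω | Z j ω = 1} := by simp [h]
    simp [h, Set.indicator_of_notMem this]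
  · have : ω ∈ {ω | Z j ω = 1} := by simp [h]
    simp only [h, Nat.cast_one, mul_one, Set.indicator_of_mem this]
    ring

lemma mgf_bern (Z : ℕ → Ω → ℕ) (hm : ∀ j, Measurable (Z j))
    (h01 : ∀ j ω, Z j ω = 0 ∨ Z j ω = 1) (j : ℕ) {p : ℝ} (hp0 : 0 ≤ p)
    (hp : ℙ {ω | Z j ω = 1} = ENNReal.ofReal p) (θ : ℝ) :
    mgf (fun ω => (Z j ω : ℝ)) ℙ θ = 1 + (Real.exp θ - 1) * p := by
  have hs : MeasurableSet {ω : Ω | Z j ω = 1} := (hm j) (measurableSet_singleton 1)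
  rw [mgf]
  have : (fun ω => Real.exp (θ * (Z j ω : ℝ)))
      = fun ω => 1 + (Real.exp θ - 1) * ({ω | Z j ω = 1}.indicator (fun _ => (1 : ℝ)) ω) := by
    funext ω; exact exp_eq_indicator Z h01 j θ ω
  rw [this]
  have hind : Integrable ({ω : Ω | Z j ω = 1}.indicator (fun _ => (1 : ℝ))) ℙ :=
    (integrable_const (1 : ℝ)).indicator hs
  rw [integral_add (integrable_const 1) (hind.const_mul _), integral_const,
    MeasureTheory.integral_const_mul, integral_indicator_const (1 : ℝ) hs, measureReal_def (s := {ω | Z j ω = 1}), hp,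
    ENNReal.toReal_ofReal hp0]
  simp

lemma integrable_exp_sum (Z : ℕ → Ω → ℕ) (hm : ∀ j, Measurable (Z j))
    (h01 : ∀ j ω, Z j ω = 0 ∨ Z j ω = 1) (s : Finset ℕ) (θ : ℝ) :
    Integrable (fun ω => Real.exp (θ * ∑ j ∈ s, (Z j ω : ℝ))) ℙ := by
  have hmeas : Measurable fun ω => Real.exp (θ * ∑ j ∈ s, (Z j ω : ℝ)) := by
    refine (Real.measurable_exp).comp (Measurable.const_mul ?_ θ)
    exact Finset.measurable_sum s fun j _ => measurable_from_top.comp (hm j)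
  refine (integrable_const (Real.exp (|θ| * s.card))).mono' hmeas.aestronglyMeasurable
    (ae_of_all _ fun ω => ?_)
  rw [Real.norm_eq_abs, abs_of_pos (Real.exp_pos _), Real.exp_le_exp]
  have h0 : (0 : ℝ) ≤ ∑ j ∈ s, (Z j ω : ℝ) := Finset.sum_nonneg fun j _ => by positivity
  have h1 : ∑ j ∈ s, (Z j ω : ℝ) ≤ s.card := by
    rw [Finset.card_eq_sum_ones s]
    push_cast
    refine Finset.sum_le_sum fun j _ => ?_
    rcases h01 j ω with h | h <;> simp [h]
  calc θ * ∑ j ∈ s, (Z j ω : ℝ) ≤ |θ| * ∑ j ∈ s, (Z j ω : ℝ) :=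
        mul_le_mul_of_nonneg_right (le_abs_self θ) h0
    _ ≤ |θ| * s.card := mul_le_mul_of_nonneg_left h1 (abs_nonneg θ)

lemma chernoff_core (Z : ℕ → Ω → ℕ) (hm : ∀ j, Measurable (Z j))
    (h01 : ∀ j ω, Z j ω = 0 ∨ Z j ω = 1)
    (hind : iIndepFun Z ℙ)
    (p : ℕ → ℝ) (hp0 : ∀ j, 0 ≤ p j) (s : Finset ℕ)
    (hp : ∀ j ∈ s, ℙ {ω | Z j ω = 1} = ENNReal.ofReal (p j)) (θ : ℝ) :
    mgf (∑ j ∈ s, fun ω => (Z j ω : ℝ)) ℙ θ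
      ≤ Real.exp ((Real.exp θ - 1) * ∑ j ∈ s, p j) := by
  have hXm : ∀ j : ℕ, Measurable (fun ω => (Z j ω : ℝ)) :=
    fun j => measurable_from_top.comp (hm j)
  have hXind : iIndepFun (fun j (ω : Ω) => (Z j ω : ℝ)) ℙ :=
    hind.comp (fun _ => ((↑·) : ℕ → ℝ)) (fun _ => measurable_from_top)
  rw [hXind.mgf_sum hXm s]
  calc ∏ j ∈ s, mgf (fun ω => (Z j ω : ℝ)) ℙ θ
      ≤ ∏ j ∈ s, Real.exp ((Real.exp θ - 1) * p j) := by
        refine Finset.prod_le_prod (fun j _ => mgf_nonneg) (fun j hj => ?_)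
        rw [mgf_bern Z hm h01 j (hp0 j) (hp j hj) θ]
        have := Real.add_one_le_exp ((Real.exp θ - 1) * p j)
        linarith
    _ = Real.exp ((Real.exp θ - 1) * ∑ j ∈ s, p j) := by
        rw [← Real.exp_sum, Finset.mul_sum]

lemma chernoff_le (Z : ℕ → Ω → ℕ) (hm : ∀ j, Measurable (Z j))
    (h01 : ∀ j ω, Z j ω = 0 ∨ Z j ω = 1)
    (hind : iIndepFun Z ℙ)
    (p : ℕ → ℝ) (hp0 : ∀ j, 0 ≤ p j) (s : Finset ℕ)
    (hp : ∀ j ∈ s, ℙ {ω | Z j ω = 1} = ENNReal.ofReal (p j)) {θ : ℝ} (hθ : θ ≤ 0) (c : ℝ) :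
    ℙ {ω | (∑ j ∈ s, (Z j ω : ℝ)) ≤ c}
      ≤ ENNReal.ofReal (Real.exp (-θ * c + (Real.exp θ - 1) * ∑ j ∈ s, p j)) := by
  have hint : Integrable (fun ω => Real.exp (θ * (∑ j ∈ s, fun ω' => (Z j ω' : ℝ)) ω)) ℙ := by
    simpa [Finset.sum_apply] using integrable_exp_sum Z hm h01 s θ
  have h1 := measure_le_le_exp_mul_mgf (μ := ℙ) (X := ∑ j ∈ s, fun ω => (Z j ω : ℝ)) c hθ hint
  have hset : {ω : Ω | (∑ j ∈ s, fun ω' => (Z j ω' : ℝ)) ω ≤ c}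
      = {ω : Ω | (∑ j ∈ s, (Z j ω : ℝ)) ≤ c} := by
    ext ω; simp [Finset.sum_apply]
  rw [hset] at h1
  have h2 : (ℙ {ω | (∑ j ∈ s, (Z j ω : ℝ)) ≤ c}).toReal
      ≤ Real.exp (-θ * c + (Real.exp θ - 1) * ∑ j ∈ s, p j) := by
    rw [Real.exp_add]
    refine h1.trans ?_
    exact mul_le_mul_of_nonneg_left (chernoff_core Z hm h01 hind p hp0 s hp θ)
      (le_of_lt (Real.exp_pos _))
  calc ℙ {ω | (∑ j ∈ s, (Z j ω : ℝ)) ≤ c}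
      = ENNReal.ofReal (ℙ {ω | (∑ j ∈ s, (Z j ω : ℝ)) ≤ c}).toReal :=
        (ENNReal.ofReal_toReal (measure_ne_top _ _)).symm
    _ ≤ _ := ENNReal.ofReal_le_ofReal h2

lemma chernoff_ge (Z : ℕ → Ω → ℕ) (hm : ∀ j, Measurable (Z j))
    (h01 : ∀ j ω, Z j ω = 0 ∨ Z j ω = 1)
    (hind : iIndepFun Z ℙ)
    (p : ℕ → ℝ) (hp0 : ∀ j, 0 ≤ p j) (s : Finset ℕ)
    (hp : ∀ j ∈ s, ℙ {ω | Z j ω = 1} = ENNReal.ofReal (p j)) {θ : ℝ} (hθ : 0 ≤ θ) (c : ℝ) :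
    ℙ {ω | c ≤ ∑ j ∈ s, (Z j ω : ℝ)}
      ≤ ENNReal.ofReal (Real.exp (-θ * c + (Real.exp θ - 1) * ∑ j ∈ s, p j)) := by
  have hint : Integrable (fun ω => Real.exp (θ * (∑ j ∈ s, fun ω' => (Z j ω' : ℝ)) ω)) ℙ := by
    simpa [Finset.sum_apply] using integrable_exp_sum Z hm h01 s θ
  have h1 := measure_ge_le_exp_mul_mgf (μ := ℙ) (X := ∑ j ∈ s, fun ω => (Z j ω : ℝ)) c hθ hint
  have hset : {ω : Ω | c ≤ (∑ j ∈ s, fun ω' => (Z j ω' : ℝ)) ω}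
      = {ω : Ω | c ≤ ∑ j ∈ s, (Z j ω : ℝ)} := by
    ext ω; simp [Finset.sum_apply]
  rw [hset] at h1
  have h2 : (ℙ {ω | c ≤ ∑ j ∈ s, (Z j ω : ℝ)}).toReal
      ≤ Real.exp (-θ * c + (Real.exp θ - 1) * ∑ j ∈ s, p j) := by
    rw [Real.exp_add]
    refine h1.trans ?_
    exact mul_le_mul_of_nonneg_left (chernoff_core Z hm h01 hind p hp0 s hp θ)
      (le_of_lt (Real.exp_pos _))
  calc ℙ {ω | c ≤ ∑ j ∈ s, (Z j ω : ℝ)}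
      = ENNReal.ofReal (ℙ {ω | c ≤ ∑ j ∈ s, (Z j ω : ℝ)}).toReal :=
        (ENNReal.ofReal_toReal (measure_ne_top _ _)).symm
    _ ≤ _ := ENNReal.ofReal_le_ofReal h2

end ProbLemmas

section Det

variable {Ω : Type} (Z : ℕ → Ω → ℕ) (t : ℕ) (ω : Ω)

lemma Tidx_mono {l l' : ℕ} (h1 : 1 ≤ l) (hll : l ≤ l') (h2 : l' ≤ sampCount Z t ω) :
    Tidx Z t l ω ≤ Tidx Z t l' ω := by
  set F := (Finset.Icc 1 t).filter (fun j => Z j ω = 1)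
  have hlen : (F.sort (· ≤ ·)).length = F.card := Finset.length_sort _
  have hc : sampCount Z t ω = F.card := rfl
  have hlt' : l' - 1 < (F.sort (· ≤ ·)).length := by
    rw [hlen]; omega
  have hlt : l - 1 < (F.sort (· ≤ ·)).length :=
    lt_of_le_of_lt (by omega) hlt'
  rw [show Tidx Z t l ω = (F.sort (· ≤ ·)).getD (l-1) 0 from rfl,
    show Tidx Z t l' ω = (F.sort (· ≤ ·)).getD (l'-1) 0 from rfl,
    List.getD_eq_getElem _ _ hlt, List.getD_eq_getElem _ _ hlt']
  rcases eq_or_lt_of_le (show l - 1 ≤ l' - 1 by omega) with h | h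
  · simp [h]
  · exact le_of_lt ((Finset.sortedLT_sort F).strictMono_get (show (⟨l-1, hlt⟩ : Fin _) < ⟨l'-1, hlt'⟩ from h))

/-- the inverse of `Tidx`: given a sampling time, produce its index. -/
def Tinv (j : ℕ) : ℕ :=
  (((Finset.Icc 1 t).filter (fun j => Z j ω = 1)).sort (· ≤ ·)).idxOf j + 1

lemma Tinv_spec {j : ℕ}
    (hj : j ∈ (Finset.Icc 1 t).filter (fun j => Z j ω = 1)) :
    1 ≤ Tinv Z t ω j ∧ Tinv Z t ω j ≤ sampCount Z t ω ∧ Tidx Z t (Tinv Z t ω j) ω = j := by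
  set F := (Finset.Icc 1 t).filter (fun j => Z j ω = 1)
  have hmem : j ∈ F.sort (· ≤ ·) := (Finset.mem_sort (α := ℕ) (· ≤ ·)).mpr hj
  have hlt : (F.sort (· ≤ ·)).idxOf j < (F.sort (· ≤ ·)).length :=
    List.idxOf_lt_length_iff.mpr hmem
  refine ⟨le_add_self, ?_, ?_⟩
  · have := hlt; rw [Finset.length_sort] at this
    have hc : sampCount Z t ω = F.card := rfl
    show (F.sort (· ≤ ·)).idxOf j + 1 ≤ sampCount Z t ω
    omega
  · rw [show Tidx Z t (Tinv Z t ω j) ω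
        = (F.sort (· ≤ ·)).getD ((F.sort (· ≤ ·)).idxOf j + 1 - 1) 0 from rfl]
    simp only [Nat.add_sub_cancel]
    rw [List.getD_eq_getElem _ _ hlt]
    exact List.getElem_idxOf hlt

lemma bridge (h01 : ∀ j ω, Z j ω = 0 ∨ Z j ω = 1)
    (s : ℕ → ℕ) (γ : ℝ) (k : ℕ)
    (I J : Finset ℕ)
    (hIsub : I ⊆ Finset.Icc 1 t) (hJsub : J ⊆ Finset.Icc 1 t)
    (hIlow : ∀ j ∈ I, s (k+1) ≤ j)
    (hIhigh : ∀ j ∈ I, (j : ℝ) < (s (k+1) : ℝ) + (t : ℝ) ^ γ)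
    (hJlow : ∀ j ∈ J, (s (k+1) : ℝ) + (t : ℝ) ^ γ ≤ (j : ℝ))
    (hs1 : 1 ≤ s (k+1))
    (T2 : ℝ) (hT2 : 0 ≤ T2)
    (hIsum : T2 < ∑ j ∈ I, (Z j ω : ℝ))
    (hJsum : ∃ j ∈ J, Z j ω = 1) :
    T2 ≤ (Lidx Z s t γ (k+1) ω : ℝ) - (Uidx Z s t k ω : ℝ) := by
  classical
  set F := (Finset.Icc 1 t).filter (fun j => Z j ω = 1) with hF
  set n := sampCount Z t ω with hn
  set Λ := I.filter (fun j => Z j ω = 1) with hΛ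
  have hΛF : Λ ⊆ F := fun j hj => by
    rw [hΛ, Finset.mem_filter] at hj
    exact Finset.mem_filter.mpr ⟨hIsub hj.1, hj.2⟩
  have hcard : (Λ.card : ℝ) = ∑ j ∈ I, (Z j ω : ℝ) := by
    rw [hΛ, Finset.card_filter]
    push_cast
    refine Finset.sum_congr rfl fun j _ => ?_
    rcases h01 j ω with h | h <;> simp [h]
  have hT2card : T2 < (Λ.card : ℝ) := hcard ▸ hIsum
  set Lset := {l : ℕ | 1 ≤ l ∧ l ≤ sampCount Z t ω ∧
    (s (k+1) : ℝ) + (t : ℝ) ^ γ ≤ (Tidx Z t l ω : ℝ)} with hLset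
  obtain ⟨jJ, hjJ, hZjJ⟩ := hJsum
  have hjJF : jJ ∈ F := Finset.mem_filter.mpr ⟨hJsub hjJ, hZjJ⟩
  obtain ⟨h1J, hnJ, hTJ⟩ := Tinv_spec Z t ω hjJF
  have hLne : Lset.Nonempty := ⟨Tinv Z t ω jJ, h1J, hnJ, by rw [hTJ]; exact hJlow jJ hjJ⟩
  have hLmem : Lidx Z s t γ (k+1) ω ∈ Lset := Nat.sInf_mem hLne
  obtain ⟨hL1, hLn, hLT⟩ := hLmem
  set L := Lidx Z s t γ (k+1) ω
  set U := Uidx Z s t k ω with hU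
  set Uset := {l : ℕ | 1 ≤ l ∧ l ≤ sampCount Z t ω ∧ Tidx Z t l ω ≤ s (k + 1) - 1} with hUset
  have hsub : Λ.image (Tinv Z t ω) ⊆ Finset.Ioo U L := by
    intro l' hl'
    obtain ⟨j, hjΛ, rfl⟩ := Finset.mem_image.mp hl'
    have hjF : j ∈ F := hΛF hjΛ
    obtain ⟨h1j, hnj, hTj⟩ := Tinv_spec Z t ω hjF
    have hjI : j ∈ I := (Finset.mem_filter.mp hjΛ).1
    rw [Finset.mem_Ioo]
    constructor
    · by_contra hle
      push_neg at hle
      rcases Set.eq_empty_or_nonempty Uset with hUe | hUne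
      · have hU0 : U = 0 := by
          rw [hU, Uidx, ← hUset, hUe, csSup_empty]
          rfl
        omega
      · have hUmem : U ∈ Uset := by
          rw [hU, Uidx, ← hUset]
          exact Nat.sSup_mem hUne ⟨n, fun u hu => hu.2.1⟩
        obtain ⟨hU1, hUn, hUT⟩ := hUmem
        have hmono : Tidx Z t (Tinv Z t ω j) ω ≤ Tidx Z t U ω := Tidx_mono Z t ω h1j hle hUn
        rw [hTj] at hmono
        have hlow := hIlow j hjI
        omega
    · by_contra hle
      push_neg at hle
      have hmono : Tidx Z t L ω ≤ Tidx Z t (Tinv Z t ω j) ω := Tidx_mono Z t ω hL1 hle hnj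
      have hcast : (Tidx Z t L ω : ℝ) ≤ (j : ℝ) := by
        rw [← hTj]; exact_mod_cast hmono
      have := hIhigh j hjI
      linarith
  have hinj : Set.InjOn (Tinv Z t ω) Λ := by
    intro j1 h1 j2 h2 he
    have s1 := (Tinv_spec Z t ω (hΛF h1)).2.2
    have s2 := (Tinv_spec Z t ω (hΛF h2)).2.2
    rw [← s1, ← s2, he]
  have hcardeq : (Λ.image (Tinv Z t ω)).card = Λ.card := Finset.card_image_of_injOn hinj
  have hle1 : Λ.card ≤ L - U - 1 := by
    rw [← hcardeq, ← Nat.card_Ioo U L]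
    exact Finset.card_le_card hsub
  have hΛpos : 0 < Λ.card := by
    by_contra h
    push_neg at h
    have : (Λ.card : ℝ) ≤ 0 := by exact_mod_cast h
    linarith
  have hnat : Λ.card + U + 1 ≤ L := by omega
  have hcast : (Λ.card : ℝ) + (U : ℝ) + 1 ≤ (L : ℝ) := by exact_mod_cast hnat
  linarith

end Det

section TailR

variable {Ω : Type} [MeasureSpace Ω] [IsProbabilityMeasure (ℙ : Measure Ω)]

lemma tail_exp_bound {a δ : ℝ} (ha : 0 ≤ a) (hδ0 : 0 < δ) (hδ1 : δ ≤ 1) :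
    -(-(δ/2)) * (a*(1-δ)) + (Real.exp (-(δ/2)) - 1) * a ≤ -(a*δ^2/4)
    ∧ -(δ/2) * (a*(1+δ)) + (Real.exp (δ/2) - 1) * a ≤ -(a*δ^2/4) := by
  have h1 : Real.exp (-(δ/2)) ≤ 1 + (-(δ/2)) + (-(δ/2))^2 :=
    exp_quad (by rw [abs_of_nonpos (by linarith)]; linarith)
  have h2 : Real.exp (δ/2) ≤ 1 + δ/2 + (δ/2)^2 :=
    exp_quad (by rw [abs_of_nonneg (by linarith)]; linarith)
  have e1 : (Real.exp (-(δ/2)) - 1) * a ≤ (-(δ/2) + (δ/2)^2) * a := by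
    apply mul_le_mul_of_nonneg_right _ ha
    nlinarith
  have e2 : (Real.exp (δ/2) - 1) * a ≤ (δ/2 + (δ/2)^2) * a := by
    apply mul_le_mul_of_nonneg_right _ ha
    nlinarith
  constructor
  · nlinarith [e1]
  · nlinarith [e2]

lemma tail_r (Z : ℕ → Ω → ℕ) (hm : ∀ j, Measurable (Z j))
    (h01 : ∀ j ω, Z j ω = 0 ∨ Z j ω = 1)
    (hind : iIndepFun Z ℙ)
    {β : ℝ}
    (hZp : ∀ j : ℕ, 1 ≤ j → ℙ {ω | Z j ω = 1} = ENNReal.ofReal ((j:ℝ) ^ (-β)))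
    (r : ℕ) (hr3 : 3 ≤ r) :
    ℙ ({ω | ∑ j ∈ Finset.Icc 1 r, (Z j ω : ℝ)
            ≤ (∑ j ∈ Finset.Icc 1 r, (j:ℝ) ^ (-β)) * (1 - 1/Real.log r)}
        ∪ {ω | (∑ j ∈ Finset.Icc 1 r, (j:ℝ) ^ (-β)) * (1 + 1/Real.log r)
            ≤ ∑ j ∈ Finset.Icc 1 r, (Z j ω : ℝ)})
      ≤ ENNReal.ofReal (2 * Real.exp
          (-((∑ j ∈ Finset.Icc 1 r, (j:ℝ) ^ (-β)) * (1/Real.log r)^2 / 4))) := by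
  set a := ∑ j ∈ Finset.Icc 1 r, (j:ℝ) ^ (-β) with hadef
  set δ := 1/Real.log r with hδdef
  have hr0 : (0:ℝ) < r := by
    have : (3:ℝ) ≤ r := by exact_mod_cast hr3
    linarith
  have hlog1 : 1 ≤ Real.log r := by
    rw [Real.le_log_iff_exp_le hr0]
    calc Real.exp 1 ≤ 2.7182818286 := Real.exp_one_lt_d9.le
      _ ≤ 3 := by norm_num
      _ ≤ r := by exact_mod_cast hr3
  have hδ0 : 0 < δ := by rw [hδdef]; positivity
  have hδ1 : δ ≤ 1 := by
    rw [hδdef, div_le_one (by linarith)]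
    linarith
  have ha0 : 0 ≤ a := Finset.sum_nonneg fun j _ => Real.rpow_nonneg (Nat.cast_nonneg j) _
  have hp : ∀ j ∈ Finset.Icc 1 r, ℙ {ω : Ω | Z j ω = 1} = ENNReal.ofReal ((j:ℝ) ^ (-β)) :=
    fun j hj => hZp j (Finset.mem_Icc.mp hj).1
  have hp0 : ∀ j : ℕ, 0 ≤ (j:ℝ) ^ (-β) := fun j => Real.rpow_nonneg (Nat.cast_nonneg j) _
  obtain ⟨hb1, hb2⟩ := tail_exp_bound ha0 hδ0 hδ1
  have hlo := chernoff_le Z hm h01 hind _ hp0 (Finset.Icc 1 r) hp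
    (θ := -(δ/2)) (by linarith) (a * (1-δ))
  have hhi := chernoff_ge Z hm h01 hind _ hp0 (Finset.Icc 1 r) hp
    (θ := δ/2) (by linarith) (a * (1+δ))
  have hE : 0 ≤ Real.exp (-(a*δ^2/4)) := (Real.exp_pos _).le
  calc ℙ ({ω | ∑ j ∈ Finset.Icc 1 r, (Z j ω : ℝ) ≤ a * (1 - δ)}
        ∪ {ω | a * (1 + δ) ≤ ∑ j ∈ Finset.Icc 1 r, (Z j ω : ℝ)})
      ≤ ℙ {ω | ∑ j ∈ Finset.Icc 1 r, (Z j ω : ℝ) ≤ a * (1 - δ)}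
        + ℙ {ω | a * (1 + δ) ≤ ∑ j ∈ Finset.Icc 1 r, (Z j ω : ℝ)} := measure_union_le _ _
    _ ≤ ENNReal.ofReal (Real.exp (-(-(δ/2)) * (a*(1-δ)) + (Real.exp (-(δ/2)) - 1) * a))
        + ENNReal.ofReal (Real.exp (-(δ/2) * (a*(1+δ)) + (Real.exp (δ/2) - 1) * a)) :=
        add_le_add hlo hhi
    _ ≤ ENNReal.ofReal (Real.exp (-(a*δ^2/4))) + ENNReal.ofReal (Real.exp (-(a*δ^2/4))) := by
        refine add_le_add (ENNReal.ofReal_le_ofReal (Real.exp_le_exp.mpr ?_))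
          (ENNReal.ofReal_le_ofReal (Real.exp_le_exp.mpr ?_))
        · exact hb1
        · exact hb2
    _ = ENNReal.ofReal (2 * Real.exp (-(a * δ^2 / 4))) := by
        rw [← ENNReal.ofReal_add hE hE]
        ring_nf

end TailR

/-- Suppose `min_k (s_{k+1} − s_k) ≥ t^{γ0}` and fix `0 < β < γ < γ0`. With
`E_exp` the event that `a(1,r)(1 − 1/log r) ≤ #E(r) ≤ a(1,r)(1 + 1/log r)` for all integers
`(log t)^{2/(1−β)} ≤ r ≤ t` and `E_diff = ∩_k {L_{k+1} − U_k ≥ t^{γ−β}/2}`, there is a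
constant `C > 0` such that for all sufficiently large `t`,
`P(E_exp ∩ E_diff) ≥ 1 − exp(−(log t)^{3/2}) − t·exp(−C·t^{γ−β})`. -/
theorem exp_and_diff_event_bound
    (γ0 β γ : ℝ) (hγ00 : 0 < γ0) (hγ01 : γ0 ≤ 1)
    (hβ0 : 0 < β) (hβγ : β < γ) (hγγ0 : γ < γ0) :
    ∃ C : ℝ, 0 < C ∧ ∃ t0 : ℕ, ∀ t : ℕ, t0 ≤ t →
      ∀ (Ω : Type) (_ : MeasureSpace Ω), IsProbabilityMeasure (ℙ : Measure Ω) →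
      ∀ (M : ℕ) (s : ℕ → ℕ) (Z : ℕ → Ω → ℕ),
        2 ≤ M → s 1 = 1 → s M = t →
        (∀ k : ℕ, 1 ≤ k → k < M → s k < s (k + 1)) →
        (∀ k : ℕ, 1 ≤ k → k < M → (t : ℝ) ^ γ0 ≤ (s (k + 1) : ℝ) - (s k : ℝ)) →
        (∀ j, Measurable (Z j)) →
        (∀ j, ∀ ω, Z j ω = 0 ∨ Z j ω = 1) →
        (∀ j : ℕ, 1 ≤ j → ℙ {ω | Z j ω = 1} = ENNReal.ofReal ((j : ℝ) ^ (-β))) →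
        iIndepFun Z ℙ →
        1 - ENNReal.ofReal (Real.exp (-(Real.log t) ^ ((3 : ℝ) / 2)))
            - ENNReal.ofReal ((t : ℝ) * Real.exp (-C * (t : ℝ) ^ (γ - β)))
          ≤ ℙ ({ω | ∀ r : ℕ, (Real.log t) ^ (2 / (1 - β)) ≤ (r : ℝ) → r ≤ t →
                  (∑ j ∈ Finset.Icc 1 r, (j : ℝ) ^ (-β)) * (1 - 1 / Real.log r)
                      ≤ (sampCount Z r ω : ℝ) ∧
                    (sampCount Z r ω : ℝ)
                      ≤ (∑ j ∈ Finset.Icc 1 r, (j : ℝ) ^ (-β)) * (1 + 1 / Real.log r)}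
              ∩ {ω | ∀ k : ℕ, 1 ≤ k → k + 1 < M →
                  (t : ℝ) ^ (γ - β) / 2
                    ≤ (Lidx Z s t γ (k + 1) ω : ℝ) - (Uidx Z s t k ω : ℝ)}) := by
  classical
  have hβ1 : β < 1 := lt_of_lt_of_le (hβγ.trans hγγ0) hγ01
  obtain ⟨X1, hX13, hX1⟩ := aux_X1 (show (0:ℝ) < (1-β)/8 by linarith)
  set C : ℝ := (1/2 - Real.exp (-1))/2 with hCdef
  have hexp1 : Real.exp (-1) < 1/2 := by
    rw [Real.exp_neg]
    have h2 : (2:ℝ) < Real.exp 1 := by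
      calc (2:ℝ) < 2.7182818283 := by norm_num
        _ < Real.exp 1 := Real.exp_one_gt_d9
    rw [show (1:ℝ)/2 = 2⁻¹ by norm_num]
    exact inv_strictAnti₀ (by norm_num) h2
  have hC0 : 0 < C := by rw [hCdef]; linarith
  refine ⟨C, hC0, ?_⟩
  have hlogT : Filter.Tendsto (fun t : ℕ => Real.log t) Filter.atTop Filter.atTop :=
    Real.tendsto_log_atTop.comp tendsto_natCast_atTop_atTop
  have hev1 : ∀ᶠ t : ℕ in Filter.atTop, X1 ≤ Real.log t ^ (2/(1-β)) :=
    ((tendsto_rpow_atTop (div_pos (by norm_num) (by linarith : (0:ℝ) < 1-β))).comp hlogT).eventually_ge_atTop X1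
  have hev2 : ∀ᶠ t : ℕ in Filter.atTop, (256:ℝ) ≤ Real.log t := hlogT.eventually_ge_atTop 256
  have hev3 : ∀ᶠ t : ℕ in Filter.atTop, (4:ℝ) ≤ (t:ℝ) ^ (γ0 - γ) :=
    ((tendsto_rpow_atTop (by linarith)).comp
      tendsto_natCast_atTop_atTop).eventually_ge_atTop 4
  have hev4 : ∀ᶠ t : ℕ in Filter.atTop, (2:ℝ) ≤ (t:ℝ) ^ γ :=
    ((tendsto_rpow_atTop (by linarith)).comp
      tendsto_natCast_atTop_atTop).eventually_ge_atTop 2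
  have hev5 : ∀ᶠ t : ℕ in Filter.atTop, Real.log 2 ≤ C * (t:ℝ) ^ (γ - β) := by
    have h := ((tendsto_rpow_atTop (show (0:ℝ) < γ - β by linarith)).comp
      tendsto_natCast_atTop_atTop).const_mul_atTop hC0
    exact h.eventually_ge_atTop _
  have hev0 : ∀ᶠ t : ℕ in Filter.atTop, 2 ≤ t := Filter.eventually_ge_atTop 2
  obtain ⟨t0, ht0⟩ := Filter.eventually_atTop.mp
    (hev0.and (hev1.and (hev2.and (hev3.and (hev4.and hev5)))))
  refine ⟨t0, fun t ht Ω _inst hPr M s Z hM hs1 hsM hsmono hgap hZm hZ01 hZp hZind => ?_⟩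
  haveI := hPr
  obtain ⟨ht2, hX1L, hL256, hg4, hg2, hlog2C⟩ := ht0 t ht
  have hx1 : (1:ℝ) ≤ (t:ℝ) := by exact_mod_cast (by omega : 1 ≤ t)
  have hx0 : (0:ℝ) < (t:ℝ) := by linarith
  have hL0 : 0 ≤ Real.log t := Real.log_nonneg hx1
  have hT1 : 1 ≤ (t:ℝ) ^ (γ - β) := by
    rw [show (1:ℝ) = (t:ℝ) ^ (0:ℝ) by rw [Real.rpow_zero]]
    exact Real.rpow_le_rpow_of_exponent_le hx1 (by linarith)
  have hT0 : (0:ℝ) < (t:ℝ) ^ (γ - β) := by linarith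
  -- monotonicity facts about `s`
  have smono' : ∀ d i, 1 ≤ i → i + d ≤ M → s i + d ≤ s (i + d) := by
    intro d
    induction d with
    | zero => intro i _ _; simp
    | succ n ih =>
      intro i h1 h2
      have ha := ih i h1 (by omega)
      have hb := hsmono (i + n) (by omega) (by omega)
      have he : i + (n + 1) = (i + n) + 1 := rfl
      rw [he]
      omega
  have hs_le_t : ∀ i, 1 ≤ i → i ≤ M → s i ≤ t := by
    intro i h1 h2
    have h := smono' (M - i) i h1 (by omega)
    rw [show i + (M - i) = M by omega, hsM] at h
    omega
  have hs_ge1 : ∀ i, 1 ≤ i → i ≤ M → 1 ≤ s i := by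
    intro i h1 h2
    have h := smono' (i - 1) 1 le_rfl (by omega)
    rw [show 1 + (i - 1) = i by omega, ] at h
    omega
  have hMt : M ≤ t := by
    have h := smono' (M - 1) 1 le_rfl (by omega)
    rw [show 1 + (M - 1) = M by omega, hsM] at h
    omega
  -- B-side setup
  set m' : ℕ := ⌈(t:ℝ) ^ γ⌉₊ with hm'def
  set T : ℝ := (t:ℝ) ^ (γ - β) with hTdef
  set Ik : ℕ → Finset ℕ := fun k => Finset.Icc (s (k+1)) (s (k+1) + m' - 1) with hIkdef
  set Jk : ℕ → Finset ℕ := fun k => Finset.Icc (s (k+1) + m') t with hJkdef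
  set Bs : ℕ → Set Ω := fun k => {ω | 1 ≤ k ∧ k + 1 < M →
    (T/2 < ∑ j ∈ Ik k, (Z j ω : ℝ) ∧ (1:ℝ)/2 < ∑ j ∈ Jk k, (Z j ω : ℝ))} with hBsdef
  have hm'ge : (t:ℝ) ^ γ ≤ (m' : ℝ) := Nat.le_ceil _
  have hm'lt : (m' : ℝ) < (t:ℝ) ^ γ + 1 :=
    Nat.ceil_lt_add_one (Real.rpow_nonneg hx0.le γ)
  have hm'1 : 1 ≤ m' := by
    rw [hm'def, Nat.one_le_ceil_iff]
    exact Real.rpow_pos_of_pos hx0 γ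
  have hγγ0le : (t:ℝ) ^ γ ≤ (t:ℝ) ^ γ0 := Real.rpow_le_rpow_of_exponent_le hx1 hγγ0.le
  have hγ04 : 2 * (t:ℝ) ^ γ + 2 ≤ (t:ℝ) ^ γ0 := by
    have hsplit : (t:ℝ) ^ γ0 = (t:ℝ) ^ γ * (t:ℝ) ^ (γ0 - γ) := by
      rw [← Real.rpow_add hx0]; ring_nf
    rw [hsplit]
    nlinarith
  have hTsplit : (t:ℝ) ^ γ * (t:ℝ) ^ (-β) = T := by
    rw [hTdef, ← Real.rpow_add hx0]; ring_nf
  -- per-k facts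
  have perk : ∀ k : ℕ, 1 ≤ k → k + 1 < M →
      (Ik k ⊆ Finset.Icc 1 t ∧ Jk k ⊆ Finset.Icc 1 t
        ∧ (∀ j ∈ Ik k, s (k+1) ≤ j)
        ∧ (∀ j ∈ Ik k, (j:ℝ) < (s (k+1) : ℝ) + (t:ℝ) ^ γ)
        ∧ (∀ j ∈ Jk k, (s (k+1) : ℝ) + (t:ℝ) ^ γ ≤ (j:ℝ))
        ∧ 1 ≤ s (k+1)
        ∧ T ≤ ∑ j ∈ Ik k, (j:ℝ) ^ (-β)
        ∧ T ≤ ∑ j ∈ Jk k, (j:ℝ) ^ (-β)) := by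
    intro k hk1 hkM
    have f1 : 1 ≤ s (k+1) := hs_ge1 (k+1) (by omega) (by omega)
    have f2 : (t:ℝ) ^ γ0 ≤ (s (k+1+1) : ℝ) - (s (k+1) : ℝ) := hgap (k+1) (by omega) (by omega)
    have f3 : (s (k+2) : ℕ) ≤ t := hs_le_t (k+2) (by omega) (by omega)
    have f3' : ((s (k+2) : ℕ) : ℝ) ≤ (t:ℝ) := by exact_mod_cast f3
    have f2' : (t:ℝ) ^ γ0 ≤ (s (k+2) : ℝ) - (s (k+1) : ℝ) := by
      have : k + 1 + 1 = k + 2 := rfl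
      rw [this] at f2; exact f2
    -- s(k+1) + m' ≤ t  (real then nat)
    have hamt : ((s (k+1) : ℝ)) + (m' : ℝ) ≤ (t:ℝ) := by nlinarith
    have hamtn : s (k+1) + m' ≤ t := by exact_mod_cast hamt
    have hIsub : Ik k ⊆ Finset.Icc 1 t := by
      intro j hj
      rw [hIkdef] at hj
      simp only [Finset.mem_Icc] at hj ⊢
      omega
    have hJsub : Jk k ⊆ Finset.Icc 1 t := by
      intro j hj
      rw [hJkdef] at hj
      simp only [Finset.mem_Icc] at hj ⊢
      omega
    have hIlow : ∀ j ∈ Ik k, s (k+1) ≤ j := by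
      intro j hj
      rw [hIkdef] at hj
      simp only [Finset.mem_Icc] at hj
      exact hj.1
    have hIhigh : ∀ j ∈ Ik k, (j:ℝ) < (s (k+1) : ℝ) + (t:ℝ) ^ γ := by
      intro j hj
      rw [hIkdef] at hj
      simp only [Finset.mem_Icc] at hj
      have hj2 : (j : ℝ) ≤ (s (k+1) : ℝ) + (m' : ℝ) - 1 := by
        have : j ≤ s (k+1) + m' - 1 := hj.2
        have hcast : ((s (k+1) + m' - 1 : ℕ) : ℝ) = (s (k+1) : ℝ) + (m' : ℝ) - 1 := by
          have : 1 ≤ s (k+1) + m' := by omega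
          push_cast [Nat.cast_sub this]
          ring
        calc (j : ℝ) ≤ ((s (k+1) + m' - 1 : ℕ) : ℝ) := by exact_mod_cast hj.2
          _ = (s (k+1) : ℝ) + (m' : ℝ) - 1 := hcast
      linarith
    have hJlow : ∀ j ∈ Jk k, (s (k+1) : ℝ) + (t:ℝ) ^ γ ≤ (j:ℝ) := by
      intro j hj
      rw [hJkdef] at hj
      simp only [Finset.mem_Icc] at hj
      have : ((s (k+1) + m' : ℕ) : ℝ) ≤ (j : ℝ) := by exact_mod_cast hj.1
      push_cast at this
      linarith
    -- cardinality facts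
    have hIcard : (Ik k).card = m' := by
      rw [hIkdef, Nat.card_Icc]
      omega
    have hJcard : (Jk k).card = t + 1 - (s (k+1) + m') := by
      rw [hJkdef, Nat.card_Icc]
    have hJcard' : (t:ℝ) ^ γ ≤ ((Jk k).card : ℝ) := by
      rw [hJcard]
      have hle : s (k+1) + m' ≤ t + 1 := by omega
      have hcast : ((t + 1 - (s (k+1) + m') : ℕ) : ℝ)
          = (t:ℝ) + 1 - ((s (k+1) : ℝ) + (m' : ℝ)) := by
        push_cast [Nat.cast_sub hle]
        ring
      rw [hcast]
      nlinarith
    -- sums of p over the intervals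
    have hbp : ∀ (S : Finset ℕ), S ⊆ Finset.Icc 1 t →
        ((S.card : ℝ)) * (t:ℝ) ^ (-β) ≤ ∑ j ∈ S, (j:ℝ) ^ (-β) := by
      intro S hS
      calc ((S.card : ℝ)) * (t:ℝ) ^ (-β) = ∑ _j ∈ S, (t:ℝ) ^ (-β) := by
            rw [Finset.sum_const, nsmul_eq_mul]
        _ ≤ ∑ j ∈ S, (j:ℝ) ^ (-β) := by
            refine Finset.sum_le_sum fun j hj => ?_
            have hj' := Finset.mem_Icc.mp (hS hj)
            refine Real.rpow_le_rpow_of_nonpos ?_ ?_ (by linarith)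
            · exact_mod_cast hj'.1
            · exact_mod_cast hj'.2
    have hpI : T ≤ ∑ j ∈ Ik k, (j:ℝ) ^ (-β) := by
      refine le_trans ?_ (hbp (Ik k) hIsub)
      rw [hIcard, ← hTsplit]
      have h0 : (0:ℝ) ≤ (t:ℝ) ^ (-β) := Real.rpow_nonneg hx0.le _
      nlinarith
    have hpJ : T ≤ ∑ j ∈ Jk k, (j:ℝ) ^ (-β) := by
      refine le_trans ?_ (hbp (Jk k) hJsub)
      rw [← hTsplit]
      have h0 : (0:ℝ) ≤ (t:ℝ) ^ (-β) := Real.rpow_nonneg hx0.le _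
      nlinarith
    exact ⟨hIsub, hJsub, hIlow, hIhigh, hJlow, f1, hpI, hpJ⟩
  -- measurability of sums
  have hsum_meas : ∀ (S : Finset ℕ), Measurable (fun ω => ∑ j ∈ S, (Z j ω : ℝ)) :=
    fun S => Finset.measurable_sum S fun j _ => measurable_from_top.comp (hZm j)
  have hsamp_meas : ∀ r : ℕ, Measurable (fun ω => (sampCount Z r ω : ℝ)) := by
    intro r
    have he : (fun ω => (sampCount Z r ω : ℝ)) = fun ω => ∑ j ∈ Finset.Icc 1 r, (Z j ω : ℝ) :=
      funext fun ω => sampCount_cast Z hZ01 r ω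
    rw [he]; exact hsum_meas _
  set EA : Set Ω := {ω | ∀ r : ℕ, (Real.log t) ^ (2 / (1 - β)) ≤ (r : ℝ) → r ≤ t →
      (∑ j ∈ Finset.Icc 1 r, (j : ℝ) ^ (-β)) * (1 - 1 / Real.log r)
          ≤ (sampCount Z r ω : ℝ) ∧
        (sampCount Z r ω : ℝ)
          ≤ (∑ j ∈ Finset.Icc 1 r, (j : ℝ) ^ (-β)) * (1 + 1 / Real.log r)} with hEAdef
  set EB : Set Ω := {ω | ∀ k : ℕ, 1 ≤ k → k + 1 < M →
      T / 2 ≤ (Lidx Z s t γ (k + 1) ω : ℝ) - (Uidx Z s t k ω : ℝ)} with hEBdef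
  -- measurability of EA
  have hEAm : MeasurableSet EA := by
    rw [hEAdef, Set.setOf_forall]
    refine MeasurableSet.iInter fun r => ?_
    by_cases h1 : (Real.log t) ^ (2 / (1 - β)) ≤ (r : ℝ)
    · by_cases h2 : r ≤ t
      · simp only [eq_true h1, eq_true h2, true_implies]
        rw [Set.setOf_and]
        exact (measurableSet_le measurable_const (hsamp_meas r)).inter
          (measurableSet_le (hsamp_meas r) measurable_const)
      · simp only [eq_false h2, false_implies, implies_true, Set.setOf_true]
        exact MeasurableSet.univ
    · simp only [eq_false h1, false_implies, Set.setOf_true]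
      exact MeasurableSet.univ
  have hBsm : ∀ k, MeasurableSet (Bs k) := by
    intro k
    rw [hBsdef]
    by_cases hc : 1 ≤ k ∧ k + 1 < M
    · simp only [eq_true hc, true_implies]
      rw [Set.setOf_and]
      exact (measurableSet_lt measurable_const (hsum_meas _)).inter
        (measurableSet_lt measurable_const (hsum_meas _))
    · simp only [eq_false hc, false_implies, Set.setOf_true]
      exact MeasurableSet.univ
  -- Part A : the exponential-count event
  have hA : ℙ EAᶜ ≤ ENNReal.ofReal (Real.exp (-(Real.log t) ^ ((3:ℝ)/2))) := by
    set D : ℕ → Set Ω := fun r =>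
      if (Real.log t) ^ (2 / (1 - β)) ≤ (r : ℝ) ∧ r ≤ t then
        ({ω | ∑ j ∈ Finset.Icc 1 r, (Z j ω : ℝ)
              ≤ (∑ j ∈ Finset.Icc 1 r, (j:ℝ) ^ (-β)) * (1 - 1 / Real.log r)}
          ∪ {ω | (∑ j ∈ Finset.Icc 1 r, (j:ℝ) ^ (-β)) * (1 + 1 / Real.log r)
              ≤ ∑ j ∈ Finset.Icc 1 r, (Z j ω : ℝ)})
      else ∅ with hDdef
    have hsub : EAᶜ ⊆ ⋃ r ∈ Finset.range (t+1), D r := by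
      intro ω hω
      rw [hEAdef] at hω
      simp only [Set.mem_compl_iff, Set.mem_setOf_eq, not_forall, Classical.not_imp] at hω
      obtain ⟨r, h1, h2, h3⟩ := hω
      have hmem : r ∈ Finset.range (t+1) := Finset.mem_range.mpr (by omega)
      refine Set.mem_biUnion hmem ?_
      simp only [hDdef]
      rw [if_pos (And.intro h1 h2)]
      rw [sampCount_cast Z hZ01 r ω] at h3
      simp only [Set.mem_union, Set.mem_setOf_eq]
      rcases not_and_or.mp h3 with h | h
      · exact Or.inl (le_of_not_ge h)
      · exact Or.inr (le_of_not_ge h)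
    have hDr : ∀ r ∈ Finset.range (t+1),
        ℙ (D r) ≤ ENNReal.ofReal (2 * Real.exp (-(Real.log t) ^ ((7:ℝ)/4))) := by
      intro r _
      simp only [hDdef]
      split_ifs with hc
      · obtain ⟨hc1, hc2⟩ := hc
        have hX1r : X1 ≤ (r:ℝ) := le_trans hX1L hc1
        have hr3 : 3 ≤ r := by
          have h3r : (3:ℝ) ≤ (r:ℝ) := le_trans hX13 hX1r
          exact_mod_cast h3r
        have hr0 : (0:ℝ) < r := by
          have h3r : (3:ℝ) ≤ (r:ℝ) := le_trans hX13 hX1r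
          linarith
        refine le_trans (tail_r Z hZm hZ01 hZind hZp r hr3) (ENNReal.ofReal_le_ofReal ?_)
        have hlr1 : 1 ≤ Real.log r := by
          rw [Real.le_log_iff_exp_le hr0]
          calc Real.exp 1 ≤ 2.7182818286 := Real.exp_one_lt_d9.le
            _ ≤ 3 := by norm_num
            _ ≤ (r:ℝ) := by exact_mod_cast hr3
        have ha_lb : (r:ℝ) ^ (1-β) ≤ ∑ j ∈ Finset.Icc 1 r, (j:ℝ) ^ (-β) :=
          aux_sum_lb hβ0 r (by omega)
        have hsplit : (r:ℝ) ^ (1-β) = (r:ℝ) ^ ((1-β)*(7/8)) * (r:ℝ) ^ ((1-β)/8) := by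
          rw [← Real.rpow_add hr0]; congr 1; ring
        have h78 : (Real.log t) ^ ((7:ℝ)/4) ≤ (r:ℝ) ^ ((1-β)*(7/8)) := by
          have h0 : (0:ℝ) ≤ (Real.log t) ^ (2/(1-β)) := Real.rpow_nonneg hL0 _
          have h1 := Real.rpow_le_rpow h0 hc1 (show (0:ℝ) ≤ (1-β)*(7/8) by nlinarith)
          rw [← Real.rpow_mul hL0] at h1
          have hne : (1:ℝ)-β ≠ 0 := by linarith
          have he : (2/(1-β))*((1-β)*(7/8)) = (7:ℝ)/4 := by
            field_simp
            ring
          rwa [he] at h1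
        have h8 : 4 * (Real.log r)^2 ≤ (r:ℝ) ^ ((1-β)/8) := hX1 r hX1r
        have hcomb : (Real.log t) ^ ((7:ℝ)/4) * (4 * (Real.log r)^2)
            ≤ ∑ j ∈ Finset.Icc 1 r, (j:ℝ) ^ (-β) := by
          calc (Real.log t) ^ ((7:ℝ)/4) * (4 * (Real.log r)^2)
              ≤ (r:ℝ)^((1-β)*(7/8)) * (r:ℝ)^((1-β)/8) :=
                mul_le_mul h78 h8 (by positivity) (Real.rpow_nonneg hr0.le _)
            _ = (r:ℝ)^(1-β) := hsplit.symm
            _ ≤ _ := ha_lb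
        have hkey : (Real.log t) ^ ((7:ℝ)/4)
            ≤ (∑ j ∈ Finset.Icc 1 r, (j:ℝ) ^ (-β)) * (1/Real.log r)^2 / 4 := by
          have hc4 := mul_le_mul_of_nonneg_right hcomb (sq_nonneg (1/Real.log r))
          have hone : Real.log r * (1/Real.log r) = 1 := by
            field_simp
          have heq : (Real.log t)^((7:ℝ)/4) * (4*(Real.log r)^2) * (1/Real.log r)^2
              = (Real.log t)^((7:ℝ)/4) * (Real.log r * (1/Real.log r))^2 * 4 := by ring
          rw [hone] at heq
          nlinarith [hc4, heq]
        have hmono := Real.exp_le_exp.mpr (neg_le_neg hkey)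
        nlinarith [hmono]
      · simp
    calc ℙ EAᶜ ≤ ℙ (⋃ r ∈ Finset.range (t+1), D r) := measure_mono hsub
      _ ≤ ∑ r ∈ Finset.range (t+1), ℙ (D r) := measure_biUnion_finset_le _ _
      _ ≤ ∑ _r ∈ Finset.range (t+1),
          ENNReal.ofReal (2 * Real.exp (-(Real.log t) ^ ((7:ℝ)/4))) := Finset.sum_le_sum hDr
      _ = ((t+1 : ℕ) : ENNReal) * ENNReal.ofReal (2 * Real.exp (-(Real.log t) ^ ((7:ℝ)/4))) := by
          rw [Finset.sum_const, Finset.card_range, nsmul_eq_mul]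
      _ = ENNReal.ofReal (((t:ℝ)+1) * (2 * Real.exp (-(Real.log t) ^ ((7:ℝ)/4)))) := by
          rw [← ENNReal.ofReal_natCast (t+1), ← ENNReal.ofReal_mul (by positivity)]
          norm_num
      _ ≤ ENNReal.ofReal (Real.exp (-(Real.log t) ^ ((3:ℝ)/2))) := by
          refine ENNReal.ofReal_le_ofReal ?_
          have hP : (0:ℝ) < 2*((t:ℝ)+1) := by linarith
          have hlogP : Real.log (2*((t:ℝ)+1)) ≤ Real.log 4 + Real.log t := by
            have h1 : 2*((t:ℝ)+1) ≤ 4*(t:ℝ) := by linarith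
            calc Real.log (2*((t:ℝ)+1)) ≤ Real.log (4*(t:ℝ)) :=
                  Real.log_le_log (by linarith) h1
              _ = Real.log 4 + Real.log t :=
                  Real.log_mul (by norm_num) (ne_of_gt hx0)
          have hE2 := aux_E2 hL256
          have hrw : ((t:ℝ)+1) * (2 * Real.exp (-(Real.log t) ^ ((7:ℝ)/4)))
              = Real.exp (Real.log (2*((t:ℝ)+1)) - (Real.log t) ^ ((7:ℝ)/4)) := by
            rw [sub_eq_add_neg, Real.exp_add, Real.exp_log hP]; ring
          rw [hrw]
          refine Real.exp_le_exp.mpr ?_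
          linarith
  -- Part B : per-k bad events
  have hbadk : ∀ k, ℙ ((Bs k)ᶜ) ≤ ENNReal.ofReal (2 * Real.exp (-(2*C) * T)) := by
    intro k
    by_cases hc : 1 ≤ k ∧ k + 1 < M
    · obtain ⟨hk1, hkM⟩ := hc
      obtain ⟨hIsub, hJsub, hIlow, hIhigh, hJlow, hsk1, hpI, hpJ⟩ := perk k hk1 hkM
      have hcompl : (Bs k)ᶜ ⊆ {ω | ∑ j ∈ Ik k, (Z j ω : ℝ) ≤ T/2}
          ∪ {ω | ∑ j ∈ Jk k, (Z j ω : ℝ) ≤ 1/2} := by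
        intro ω hω
        rw [hBsdef] at hω
        simp only [Set.mem_compl_iff, Set.mem_setOf_eq, Classical.not_imp, not_and_or,
          not_lt] at hω
        simp only [Set.mem_union, Set.mem_setOf_eq]
        exact hω.2
      have hpcond : ∀ (S : Finset ℕ), S ⊆ Finset.Icc 1 t →
          ∀ j ∈ S, ℙ {ω : Ω | Z j ω = 1} = ENNReal.ofReal ((j:ℝ) ^ (-β)) :=
        fun S hS j hj => hZp j (Finset.mem_Icc.mp (hS hj)).1
      have hp0 : ∀ j : ℕ, 0 ≤ (j:ℝ) ^ (-β) := fun j => Real.rpow_nonneg (Nat.cast_nonneg j) _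
      have hbI := chernoff_le Z hZm hZ01 hZind _ hp0 (Ik k) (hpcond _ hIsub)
        (θ := (-1:ℝ)) (by norm_num) (T/2)
      have hbJ := chernoff_le Z hZm hZ01 hZind _ hp0 (Jk k) (hpcond _ hJsub)
        (θ := (-1:ℝ)) (by norm_num) (1/2)
      have hexm1 : Real.exp (-1) - 1 < 0 := by nlinarith [hexp1]
      have heI : -(-1:ℝ) * (T/2) + (Real.exp (-1) - 1) * (∑ j ∈ Ik k, (j:ℝ) ^ (-β))
          ≤ -(2*C) * T := by
        have h1 : (Real.exp (-1) - 1) * (∑ j ∈ Ik k, (j:ℝ) ^ (-β))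
            ≤ (Real.exp (-1) - 1) * T := mul_le_mul_of_nonpos_left hpI hexm1.le
        rw [hCdef]
        nlinarith [h1]
      have heJ : -(-1:ℝ) * ((1:ℝ)/2) + (Real.exp (-1) - 1) * (∑ j ∈ Jk k, (j:ℝ) ^ (-β))
          ≤ -(2*C) * T := by
        have h1 : (Real.exp (-1) - 1) * (∑ j ∈ Jk k, (j:ℝ) ^ (-β))
            ≤ (Real.exp (-1) - 1) * T := mul_le_mul_of_nonpos_left hpJ hexm1.le
        rw [hCdef]
        nlinarith [h1, hT1]
      have hE : 0 ≤ Real.exp (-(2*C) * T) := (Real.exp_pos _).le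
      calc ℙ ((Bs k)ᶜ)
          ≤ ℙ ({ω | ∑ j ∈ Ik k, (Z j ω : ℝ) ≤ T/2}
            ∪ {ω | ∑ j ∈ Jk k, (Z j ω : ℝ) ≤ 1/2}) := measure_mono hcompl
        _ ≤ ℙ {ω | ∑ j ∈ Ik k, (Z j ω : ℝ) ≤ T/2}
            + ℙ {ω | ∑ j ∈ Jk k, (Z j ω : ℝ) ≤ 1/2} := measure_union_le _ _
        _ ≤ ENNReal.ofReal (Real.exp (-(-1:ℝ) * (T/2)
                + (Real.exp (-1) - 1) * (∑ j ∈ Ik k, (j:ℝ) ^ (-β))))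
            + ENNReal.ofReal (Real.exp (-(-1:ℝ) * ((1:ℝ)/2)
                + (Real.exp (-1) - 1) * (∑ j ∈ Jk k, (j:ℝ) ^ (-β)))) := add_le_add hbI hbJ
        _ ≤ ENNReal.ofReal (Real.exp (-(2*C) * T)) + ENNReal.ofReal (Real.exp (-(2*C) * T)) :=
            add_le_add (ENNReal.ofReal_le_ofReal (Real.exp_le_exp.mpr heI))
              (ENNReal.ofReal_le_ofReal (Real.exp_le_exp.mpr heJ))
        _ = ENNReal.ofReal (2 * Real.exp (-(2*C) * T)) := by
            rw [← ENNReal.ofReal_add hE hE]; ring_nf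
    · have hempty : (Bs k)ᶜ = ∅ := by
        rw [hBsdef]
        simp only [eq_false hc, false_implies, Set.setOf_true, Set.compl_univ]
      rw [hempty]
      simp
  have hB : ℙ ((⋂ k, Bs k)ᶜ) ≤ ENNReal.ofReal ((t:ℝ) * Real.exp (-C * T)) := by
    have hsub : (⋂ k, Bs k)ᶜ ⊆ ⋃ k ∈ Finset.range M, (Bs k)ᶜ := by
      intro ω hω
      rw [Set.compl_iInter] at hω
      obtain ⟨k, hk⟩ := Set.mem_iUnion.mp hω
      have hkM : k < M := by
        by_contra h
        apply hk
        rw [hBsdef]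
        exact fun hcond => absurd hcond.2 (by omega)
      exact Set.mem_biUnion (Finset.mem_range.mpr hkM) hk
    have hMfinal : (M:ℝ) * (2 * Real.exp (-(2*C) * T)) ≤ (t:ℝ) * Real.exp (-C * T) := by
      have h2e : 2 * Real.exp (-(2*C) * T) ≤ Real.exp (-C * T) := by
        have h2 : (2:ℝ) ≤ Real.exp (C*T) := by
          rw [← Real.exp_log (by norm_num : (0:ℝ) < 2)]
          exact Real.exp_le_exp.mpr hlog2C
        have hmul : Real.exp (-(2*C) * T) * Real.exp (C*T) = Real.exp (-C * T) := by
          rw [← Real.exp_add]; ring_nf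
        nlinarith [Real.exp_pos (-(2*C) * T)]
      have hM' : (M:ℝ) ≤ (t:ℝ) := by exact_mod_cast hMt
      have h0 : (0:ℝ) ≤ 2 * Real.exp (-(2*C) * T) := by positivity
      have := mul_le_mul hM' h2e h0 (by linarith)
      linarith
    calc ℙ ((⋂ k, Bs k)ᶜ) ≤ ℙ (⋃ k ∈ Finset.range M, (Bs k)ᶜ) := measure_mono hsub
      _ ≤ ∑ k ∈ Finset.range M, ℙ ((Bs k)ᶜ) := measure_biUnion_finset_le _ _
      _ ≤ ∑ _k ∈ Finset.range M, ENNReal.ofReal (2 * Real.exp (-(2*C) * T)) :=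
          Finset.sum_le_sum fun k _ => hbadk k
      _ = ((M : ℕ) : ENNReal) * ENNReal.ofReal (2 * Real.exp (-(2*C) * T)) := by
          rw [Finset.sum_const, Finset.card_range, nsmul_eq_mul]
      _ = ENNReal.ofReal ((M:ℝ) * (2 * Real.exp (-(2*C) * T))) := by
          rw [← ENNReal.ofReal_natCast M, ← ENNReal.ofReal_mul (Nat.cast_nonneg M)]
      _ ≤ ENNReal.ofReal ((t:ℝ) * Real.exp (-C * T)) := ENNReal.ofReal_le_ofReal hMfinal
  -- B' ⊆ EB via the bridge lemma
  have hB'B : (⋂ k, Bs k) ⊆ EB := by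
    intro ω hω
    rw [hEBdef]
    intro k hk1 hkM
    have hk := Set.mem_iInter.mp hω k
    rw [hBsdef] at hk
    obtain ⟨hI, hJ⟩ := hk ⟨hk1, hkM⟩
    obtain ⟨hIsub, hJsub, hIlow, hIhigh, hJlow, hsk1, _, _⟩ := perk k hk1 hkM
    have hJex : ∃ j ∈ Jk k, Z j ω = 1 := by
      by_contra h
      push_neg at h
      have hz : ∀ j ∈ Jk k, (Z j ω : ℝ) = 0 := by
        intro j hj
        rcases hZ01 j ω with h0 | h1
        · simp [h0]
        · exact absurd h1 (h j hj)
      rw [Finset.sum_eq_zero hz] at hJ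
      norm_num at hJ
    exact bridge Z t ω hZ01 s γ k (Ik k) (Jk k) hIsub hJsub hIlow hIhigh hJlow hsk1
      (T/2) (by linarith) hI hJex
  -- final assembly
  have hGm : MeasurableSet (EA ∩ ⋂ k, Bs k) := hEAm.inter (MeasurableSet.iInter hBsm)
  have hcompl : ℙ ((EA ∩ ⋂ k, Bs k)ᶜ)
      ≤ ENNReal.ofReal (Real.exp (-(Real.log t) ^ ((3:ℝ)/2)))
        + ENNReal.ofReal ((t:ℝ) * Real.exp (-C * T)) := by
    rw [Set.compl_inter]
    exact le_trans (measure_union_le _ _) (add_le_add hA hB)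
  have hprob : ℙ (EA ∩ ⋂ k, Bs k) = 1 - ℙ ((EA ∩ ⋂ k, Bs k)ᶜ) := by
    have := prob_compl_eq_one_sub (μ := ℙ) hGm.compl
    rwa [compl_compl] at this
  calc 1 - ENNReal.ofReal (Real.exp (-(Real.log t) ^ ((3:ℝ)/2)))
        - ENNReal.ofReal ((t:ℝ) * Real.exp (-C * T))
      = 1 - (ENNReal.ofReal (Real.exp (-(Real.log t) ^ ((3:ℝ)/2)))
          + ENNReal.ofReal ((t:ℝ) * Real.exp (-C * T))) := by
        rw [tsub_tsub]
    _ ≤ 1 - ℙ ((EA ∩ ⋂ k, Bs k)ᶜ) := tsub_le_tsub_left hcompl 1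
    _ = ℙ (EA ∩ ⋂ k, Bs k) := hprob.symm
    _ ≤ ℙ (EA ∩ EB) := measure_mono (Set.inter_subset_inter_right EA hB'B)
end

section
/- Let 0 < δ < 1, α_1 = 0 and α_l = 1 − l^{−δ} for l ≥ 2, and let W_1, …, W_l be independent random variables with 0 ≤ W_j ≤ 1. Define Y_0 = 0 and Y_i = α_i Y_{i−1} + (1−α_i) W_i for 1 ≤ i ≤ l, and let ν_l = E Y_l. Then there exists a constant L_0 (depending only on δ) such that for all l ≥ L_0 and every ε > 0, P(|Y_l − ν_l| ≥ ε·ν_l) ≤ 2·exp(−ε² ν_l² l^{δ}/(5(log l)²)). -/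
open MeasureTheory ProbabilityTheory Finset Real
open scoped ProbabilityTheory

/-- The weight `α_l = 1 − l^{−δ}` (note `α_1 = 0`). -/
noncomputable def alphaWt (δ : ℝ) (l : ℕ) : ℝ := 1 - (l : ℝ) ^ (-δ)

/-- The expansion weight `θ_{j,l}`. -/
noncomputable def wgt (δ : ℝ) (j l : ℕ) : ℝ :=
  (1 - alphaWt δ j) * ∏ i ∈ Finset.Icc (j + 1) l, alphaWt δ i

lemma alphaWt_nonneg {δ : ℝ} (hδ0 : 0 < δ) {i : ℕ} (hi : 1 ≤ i) : 0 ≤ alphaWt δ i := by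
  have h1 : (1 : ℝ) ≤ (i : ℝ) := by exact_mod_cast hi
  have := Real.rpow_le_one_of_one_le_of_nonpos h1 (neg_nonpos.2 hδ0.le)
  simp only [alphaWt]; linarith

lemma alphaWt_le_one {δ : ℝ} (i : ℕ) : alphaWt δ i ≤ 1 := by
  have := Real.rpow_nonneg (Nat.cast_nonneg i) (-δ)
  simp only [alphaWt]; linarith

lemma one_sub_alphaWt (δ : ℝ) (j : ℕ) : 1 - alphaWt δ j = (j : ℝ) ^ (-δ) := by
  simp [alphaWt]

lemma wgt_nonneg {δ : ℝ} (hδ0 : 0 < δ) {j : ℕ} (hj : 1 ≤ j) (l : ℕ) : 0 ≤ wgt δ j l := by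
  refine mul_nonneg ?_ (Finset.prod_nonneg fun i hi => alphaWt_nonneg hδ0 ?_)
  · rw [one_sub_alphaWt]; exact Real.rpow_nonneg (Nat.cast_nonneg j) _
  · exact le_trans (by omega) (Finset.mem_Icc.1 hi).1

/-- The key recursive step for sums of weights against an arbitrary function. -/
lemma wgt_step (δ : ℝ) (g : ℕ → ℝ) (i : ℕ) :
    ∑ j ∈ Finset.Icc 1 (i + 1), wgt δ j (i + 1) * g j
      = alphaWt δ (i + 1) * ∑ j ∈ Finset.Icc 1 i, wgt δ j i * g j
        + (1 - alphaWt δ (i + 1)) * g (i + 1) := by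
  rw [Finset.sum_Icc_succ_top (by omega : 1 ≤ i + 1)]
  have h1 : wgt δ (i + 1) (i + 1) = 1 - alphaWt δ (i + 1) := by
    simp [wgt, Finset.Icc_eq_empty_of_lt (by omega : i + 1 < i + 2)]
  rw [h1, Finset.mul_sum]
  congr 1
  refine Finset.sum_congr rfl fun j hj => ?_
  have hji : j ≤ i := (Finset.mem_Icc.1 hj).2
  rw [wgt, wgt, Finset.prod_Icc_succ_top (by omega : j + 1 ≤ i + 1)]
  ring

lemma sum_wgt_le_one {δ : ℝ} (hδ0 : 0 < δ) : ∀ i : ℕ, ∑ j ∈ Finset.Icc 1 i, wgt δ j i ≤ 1 := by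
  intro i
  induction i with
  | zero => simp
  | succ i ih =>
    have h := wgt_step δ (fun _ => 1) i
    simp only [mul_one] at h
    rw [h]
    have hα0 : 0 ≤ alphaWt δ (i + 1) := alphaWt_nonneg hδ0 (by omega)
    have hα1 : alphaWt δ (i + 1) ≤ 1 := alphaWt_le_one _
    nlinarith

lemma mgf_le_of_abs_le {Ω : Type} [MeasureSpace Ω] [IsProbabilityMeasure (ℙ : Measure Ω)]
    (X : Ω → ℝ) (hX : Measurable X) (c t : ℝ) (hc : 0 ≤ c)
    (hb : ∀ ω, |X ω| ≤ c) (hm : ∫ ω, X ω = 0) :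
    mgf X ℙ t ≤ Real.exp (t ^ 2 * c ^ 2 / 2) := by
  rcases eq_or_lt_of_le hc with hc0 | hc0
  · have hX0 : X = fun _ => (0 : ℝ) := by
      funext ω; have := hb ω; rw [← hc0] at this
      exact abs_nonpos_iff.1 this
    rw [hX0, mgf_const]
    simp only [mul_zero]
    exact Real.exp_le_exp.2 (by positivity)
  · -- pointwise convexity bound
    have hpt : ∀ ω, Real.exp (t * X ω)
        ≤ Real.cosh (t * c) + (X ω / c) * Real.sinh (t * c) := by
      intro ω
      have hxc : X ω ≤ c := (abs_le.1 (hb ω)).2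
      have hxc' : -c ≤ X ω := (abs_le.1 (hb ω)).1
      have ha : 0 ≤ (c - X ω) / (2 * c) := div_nonneg (by linarith) (by linarith)
      have hb' : 0 ≤ (c + X ω) / (2 * c) := div_nonneg (by linarith) (by linarith)
      have hab : (c - X ω) / (2 * c) + (c + X ω) / (2 * c) = 1 := by
        rw [← add_div, div_eq_one_iff_eq (by positivity)]; ring
      have hconv := convexOn_exp.2 (Set.mem_univ (-(t * c))) (Set.mem_univ (t * c))
        ha hb' hab
      simp only [smul_eq_mul] at hconv
      have harg : (c - X ω) / (2 * c) * (-(t * c)) + (c + X ω) / (2 * c) * (t * c)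
          = t * X ω := by
        rw [div_mul_eq_mul_div, div_mul_eq_mul_div, ← add_div,
          div_eq_iff (by positivity : (2 : ℝ) * c ≠ 0)]
        ring
      rw [harg] at hconv
      refine hconv.trans (le_of_eq ?_)
      rw [Real.cosh_eq, Real.sinh_eq]
      rw [div_mul_eq_mul_div, div_mul_eq_mul_div, ← add_div]
      rw [div_mul_eq_mul_div, div_add_div _ _ (by norm_num : (2:ℝ) ≠ 0) hc0.ne',
        div_eq_div_iff (by positivity) (by positivity)]
      ring
    -- integrate
    have hXint : Integrable X ℙ :=
      (integrable_const c).mono' hX.aestronglyMeasurable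
        (Filter.Eventually.of_forall fun ω => by
          rw [Real.norm_eq_abs]; exact hb ω)
    have hint1 : Integrable (fun ω => Real.exp (t * X ω)) ℙ :=
      (integrable_const (Real.exp (|t| * c))).mono'
        (hX.const_mul t).exp.aestronglyMeasurable
        (Filter.Eventually.of_forall fun ω => by
          rw [Real.norm_eq_abs, abs_of_pos (Real.exp_pos _), Real.exp_le_exp]
          calc t * X ω ≤ |t * X ω| := le_abs_self _
            _ = |t| * |X ω| := abs_mul _ _
            _ ≤ |t| * c := by
                exact mul_le_mul_of_nonneg_left (hb ω) (abs_nonneg t))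
    have hint2 : Integrable (fun ω => Real.cosh (t * c) + (X ω / c) * Real.sinh (t * c)) ℙ := by
      refine (integrable_const _).add ?_
      simpa [div_mul_eq_mul_div, mul_div_assoc, mul_comm] using
        (hXint.mul_const (Real.sinh (t * c) / c))
    have hmono := integral_mono hint1 hint2 hpt
    have hval : ∫ ω, (Real.cosh (t * c) + (X ω / c) * Real.sinh (t * c)) ∂ℙ
        = Real.cosh (t * c) := by
      rw [integral_add (integrable_const _)]
      · rw [integral_const]
        simp only [probReal_univ, one_smul]
        have : ∫ ω, X ω / c * Real.sinh (t * c) ∂ℙ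
            = (∫ ω, X ω) * Real.sinh (t * c) / c := by
          rw [← integral_mul_const, ← integral_div]
          congr 1; funext ω; ring
        rw [this, hm]; ring
      · simpa [div_mul_eq_mul_div, mul_div_assoc, mul_comm] using
          (hXint.mul_const (Real.sinh (t * c) / c))
    rw [hval] at hmono
    calc mgf X ℙ t ≤ Real.cosh (t * c) := hmono
      _ ≤ Real.exp ((t * c) ^ 2 / 2) := Real.cosh_le_exp_half_sq _
      _ = Real.exp (t ^ 2 * c ^ 2 / 2) := by rw [mul_pow]

lemma weighted_sum_concentration {Ω : Type} [MeasureSpace Ω]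
    [IsProbabilityMeasure (ℙ : Measure Ω)]
    (W : ℕ → Ω → ℝ) (hWm : ∀ j, Measurable (W j)) (hWb : ∀ j ω, 0 ≤ W j ω ∧ W j ω ≤ 1)
    (hind : iIndepFun W ℙ)
    (s : Finset ℕ) (θ : ℕ → ℝ) (hθ : ∀ j, 0 ≤ θ j)
    (V : ℝ) (hV : 0 < V) (hVs : ∑ j ∈ s, (θ j) ^ 2 ≤ V)
    (r : ℝ) (hr : 0 ≤ r) :
    ℙ {ω | r ≤ |(∑ j ∈ s, θ j * W j ω) - ∫ ω', ∑ j ∈ s, θ j * W j ω'|}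
      ≤ ENNReal.ofReal (2 * Real.exp (-(r ^ 2 / (2 * V)))) := by
  classical
  set m : ℕ → ℝ := fun j => ∫ ω, W j ω with hm_def
  -- integrability and bounds on means
  have hWint : ∀ j, Integrable (W j) ℙ := fun j =>
    (integrable_const 1).mono' (hWm j).aestronglyMeasurable
      (Filter.Eventually.of_forall fun ω => by
        rw [Real.norm_eq_abs, abs_of_nonneg (hWb j ω).1]; exact (hWb j ω).2)
  have hm0 : ∀ j, 0 ≤ m j := fun j => integral_nonneg fun ω => (hWb j ω).1
  have hm1 : ∀ j, m j ≤ 1 := fun j => by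
    have h := integral_mono (μ := ℙ) (hWint j) (integrable_const 1)
        (fun ω => (hWb j ω).2)
    simpa using h
  -- the centered summands
  set X : ℕ → Ω → ℝ := fun j ω => θ j * W j ω - θ j * m j with hX_def
  have hXm : ∀ j, Measurable (X j) := fun j => ((hWm j).const_mul _).sub_const _
  have hXb : ∀ j ω, |X j ω| ≤ θ j := fun j ω => by
    rw [abs_le]
    constructor
    · have h1 : 0 ≤ θ j * W j ω := mul_nonneg (hθ j) (hWb j ω).1
      have h2 : θ j * m j ≤ θ j := by
        nlinarith [hθ j, hm1 j]
      simp only [hX_def]; linarith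
    · have h1 : θ j * W j ω ≤ θ j := by nlinarith [hθ j, (hWb j ω).2]
      have h2 : 0 ≤ θ j * m j := mul_nonneg (hθ j) (hm0 j)
      simp only [hX_def]; linarith
  have hXint : ∀ j, Integrable (X j) ℙ := fun j =>
    ((hWint j).const_mul _).sub (integrable_const _)
  have hXmean : ∀ j, ∫ ω, X j ω = 0 := fun j => by
    rw [hX_def]
    simp only
    rw [integral_sub ((hWint j).const_mul _) (integrable_const _),
      integral_const_mul, integral_const]
    simp [hm_def]
  -- independence of the centered family
  have hXind : iIndepFun X ℙ := by
    have := hind.comp (g := fun j (x : ℝ) => θ j * x - θ j * m j)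
      (fun j => (measurable_id.const_mul _).sub_const _)
    exact this
  -- bound on the sum
  have hZb : ∀ ω, |(∑ j ∈ s, X j) ω| ≤ ∑ j ∈ s, θ j := fun ω => by
    rw [Finset.sum_apply]
    exact (Finset.abs_sum_le_sum_abs _ _).trans (Finset.sum_le_sum fun j _ => hXb j ω)
  have heq : (∑ j ∈ s, X j) = fun ω => ∑ j ∈ s, X j ω := by
    funext ω; exact Finset.sum_apply ω s X
  have hZm : Measurable (∑ j ∈ s, X j) := by
    rw [heq]; exact Finset.measurable_sum s fun j _ => hXm j
  have hZint : ∀ t : ℝ, Integrable (fun ω => Real.exp (t * (∑ j ∈ s, X j) ω)) ℙ := by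
    intro t
    refine (integrable_const (Real.exp (|t| * ∑ j ∈ s, θ j))).mono'
      ((hZm.const_mul t).exp).aestronglyMeasurable
      (Filter.Eventually.of_forall fun ω => ?_)
    rw [Real.norm_eq_abs, abs_of_pos (Real.exp_pos _), Real.exp_le_exp]
    calc t * (∑ j ∈ s, X j) ω ≤ |t * (∑ j ∈ s, X j) ω| := le_abs_self _
      _ = |t| * |(∑ j ∈ s, X j) ω| := abs_mul _ _
      _ ≤ |t| * ∑ j ∈ s, θ j := mul_le_mul_of_nonneg_left (hZb ω) (abs_nonneg t)
  -- mgf bound for the sum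
  have hmgf : ∀ t : ℝ, mgf (∑ j ∈ s, X j) ℙ t ≤ Real.exp (t ^ 2 * V / 2) := by
    intro t
    rw [hXind.mgf_sum hXm s]
    calc ∏ j ∈ s, mgf (X j) ℙ t
        ≤ ∏ j ∈ s, Real.exp (t ^ 2 * (θ j) ^ 2 / 2) := by
          refine Finset.prod_le_prod (fun j _ => mgf_nonneg) (fun j _ => ?_)
          exact mgf_le_of_abs_le (X j) (hXm j) (θ j) t (hθ j) (hXb j) (hXmean j)
      _ = Real.exp (∑ j ∈ s, t ^ 2 * (θ j) ^ 2 / 2) := by rw [Real.exp_sum]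
      _ ≤ Real.exp (t ^ 2 * V / 2) := by
          rw [Real.exp_le_exp]
          rw [← Finset.sum_div, ← Finset.mul_sum]
          have := mul_le_mul_of_nonneg_left hVs (sq_nonneg t)
          linarith
  -- Chernoff, both tails, with t = r / V
  set t₀ : ℝ := r / V with ht₀_def
  have ht₀ : 0 ≤ t₀ := div_nonneg hr hV.le
  have hexp_eq : -t₀ * r + t₀ ^ 2 * V / 2 = -(r ^ 2 / (2 * V)) := by
    rw [ht₀_def]; field_simp; ring
  have hup : (ℙ {ω | r ≤ (∑ j ∈ s, X j) ω}).toReal ≤ Real.exp (-(r ^ 2 / (2 * V))) := by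
    calc (ℙ {ω | r ≤ (∑ j ∈ s, X j) ω}).toReal
        ≤ Real.exp (-t₀ * r) * mgf (∑ j ∈ s, X j) ℙ t₀ :=
          measure_ge_le_exp_mul_mgf r ht₀ (hZint t₀)
      _ ≤ Real.exp (-t₀ * r) * Real.exp (t₀ ^ 2 * V / 2) :=
          mul_le_mul_of_nonneg_left (hmgf t₀) (Real.exp_pos _).le
      _ = Real.exp (-(r ^ 2 / (2 * V))) := by rw [← Real.exp_add, hexp_eq]
  have hlo : (ℙ {ω | (∑ j ∈ s, X j) ω ≤ -r}).toReal ≤ Real.exp (-(r ^ 2 / (2 * V))) := by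
    calc (ℙ {ω | (∑ j ∈ s, X j) ω ≤ -r}).toReal
        ≤ Real.exp (-(-t₀) * (-r)) * mgf (∑ j ∈ s, X j) ℙ (-t₀) :=
          measure_le_le_exp_mul_mgf (-r) (neg_nonpos.2 ht₀) (hZint (-t₀))
      _ ≤ Real.exp (-t₀ * r) * Real.exp (t₀ ^ 2 * V / 2) := by
          rw [show -(-t₀) * (-r) = -t₀ * r by ring]
          exact mul_le_mul_of_nonneg_left (by simpa using hmgf (-t₀)) (Real.exp_pos _).le
      _ = Real.exp (-(r ^ 2 / (2 * V))) := by rw [← Real.exp_add, hexp_eq]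
  -- combine
  have hμ : ∫ ω', ∑ j ∈ s, θ j * W j ω' = ∑ j ∈ s, θ j * m j := by
    rw [integral_finset_sum s (fun j _ => (hWint j).const_mul _)]
    exact Finset.sum_congr rfl fun j _ => integral_const_mul _ _
  have hsub : {ω | r ≤ |(∑ j ∈ s, θ j * W j ω) - ∫ ω', ∑ j ∈ s, θ j * W j ω'|}
      ⊆ {ω | r ≤ (∑ j ∈ s, X j) ω} ∪ {ω | (∑ j ∈ s, X j) ω ≤ -r} := by
    intro ω hω
    simp only [Set.mem_setOf_eq] at hω
    have hZω : (∑ j ∈ s, X j) ω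
        = (∑ j ∈ s, θ j * W j ω) - ∫ ω', ∑ j ∈ s, θ j * W j ω' := by
      rw [Finset.sum_apply, hμ, hX_def]
      simp only
      rw [Finset.sum_sub_distrib]
    rcases le_abs.1 hω with h | h
    · left; simp only [Set.mem_setOf_eq]; rw [hZω]; exact h
    · right; simp only [Set.mem_setOf_eq]; rw [hZω]; linarith
  calc ℙ {ω | r ≤ |(∑ j ∈ s, θ j * W j ω) - ∫ ω', ∑ j ∈ s, θ j * W j ω'|}
      ≤ ℙ ({ω | r ≤ (∑ j ∈ s, X j) ω} ∪ {ω | (∑ j ∈ s, X j) ω ≤ -r}) :=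
        measure_mono hsub
    _ ≤ ℙ {ω | r ≤ (∑ j ∈ s, X j) ω} + ℙ {ω | (∑ j ∈ s, X j) ω ≤ -r} :=
        measure_union_le _ _
    _ ≤ ENNReal.ofReal (Real.exp (-(r ^ 2 / (2 * V))))
        + ENNReal.ofReal (Real.exp (-(r ^ 2 / (2 * V)))) := by
        gcongr
        · rw [← ENNReal.ofReal_toReal (measure_ne_top ℙ _)]
          exact ENNReal.ofReal_le_ofReal hup
        · rw [← ENNReal.ofReal_toReal (measure_ne_top ℙ _)]
          exact ENNReal.ofReal_le_ofReal hlo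
    _ = ENNReal.ofReal (2 * Real.exp (-(r ^ 2 / (2 * V)))) := by
        rw [← ENNReal.ofReal_add (Real.exp_pos _).le (Real.exp_pos _).le]
        congr 1; ring

lemma wgt_le (δ : ℝ) (hδ0 : 0 < δ) (hδ1 : δ < 1) :
    ∃ L0 : ℕ, 3 ≤ L0 ∧ ∀ l : ℕ, L0 ≤ l → ∀ j ∈ Finset.Icc 1 l,
      wgt δ j l ≤ 2 * (l : ℝ) ^ (-δ) := by
  have hlo := (isLittleO_log_rpow_atTop (by linarith : (0:ℝ) < 1 - δ)).def
    (by positivity : (0:ℝ) < 1 / (2 * δ))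
  rw [Filter.eventually_atTop] at hlo
  obtain ⟨x0, hx0⟩ := hlo
  refine ⟨max 3 (⌈x0⌉₊ + 3), le_trans (by norm_num) (le_max_left _ _), ?_⟩
  intro l hl j hj
  obtain ⟨hj1, hjl⟩ := Finset.mem_Icc.1 hj
  have hl3 : 3 ≤ l := le_trans (le_max_left _ _) hl
  have hlpos : (0:ℝ) < l := by
    have : (0:ℕ) < l := by omega
    exact_mod_cast this
  have hl1 : (1:ℝ) ≤ l := by
    have : (1:ℕ) ≤ l := by omega
    exact_mod_cast this
  have hrneg : (0:ℝ) ≤ (l:ℝ) ^ (-δ) := Real.rpow_nonneg hlpos.le _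
  -- key inequality for the small-j case
  have hkey : Real.exp (-((l:ℝ) ^ (1 - δ) / 2)) ≤ (l : ℝ) ^ (-δ) := by
    have hlx0 : x0 ≤ (l : ℝ) := by
      have h5 : ⌈x0⌉₊ ≤ l := by
        have := le_trans (le_max_right 3 (⌈x0⌉₊ + 3)) hl; omega
      calc x0 ≤ (⌈x0⌉₊ : ℝ) := Nat.le_ceil x0
        _ ≤ (l : ℝ) := by exact_mod_cast h5
    have h1 := hx0 (l : ℝ) hlx0
    rw [Real.norm_eq_abs, Real.norm_eq_abs, abs_of_nonneg (Real.log_nonneg hl1),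
      abs_of_nonneg (Real.rpow_nonneg hlpos.le _)] at h1
    have h2 : δ * Real.log l ≤ (l:ℝ) ^ (1 - δ) / 2 := by
      have h3 := mul_le_mul_of_nonneg_left h1 hδ0.le
      have h4 : δ * (1 / (2 * δ) * (l:ℝ) ^ (1 - δ)) = (l:ℝ) ^ (1 - δ) / 2 := by
        field_simp
      linarith
    rw [Real.rpow_def_of_pos hlpos (-δ)]
    rw [Real.exp_le_exp]
    nlinarith [Real.log_nonneg hl1]
  rcases le_or_gt l (2 * j) with hcase | hcase
  · -- large j : wgt ≤ j^(-δ) ≤ 2^δ l^(-δ) ≤ 2 l^(-δ)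
    have hprod : ∏ i ∈ Finset.Icc (j + 1) l, alphaWt δ i ≤ 1 :=
      Finset.prod_le_one (fun i hi => alphaWt_nonneg hδ0
        (le_trans (by omega) (Finset.mem_Icc.1 hi).1)) (fun i _ => alphaWt_le_one i)
    have hjpos : (0:ℝ) < j := by
      have : (0:ℕ) < j := by omega
      exact_mod_cast this
    have h1 : wgt δ j l ≤ (j:ℝ) ^ (-δ) := by
      rw [wgt, one_sub_alphaWt]
      calc (j:ℝ) ^ (-δ) * ∏ i ∈ Finset.Icc (j + 1) l, alphaWt δ i
          ≤ (j:ℝ) ^ (-δ) * 1 := by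
            refine mul_le_mul_of_nonneg_left hprod (Real.rpow_nonneg hjpos.le _)
        _ = (j:ℝ) ^ (-δ) := mul_one _
    have h2 : (j:ℝ) ^ (-δ) ≤ ((l:ℝ) / 2) ^ (-δ) := by
      refine Real.rpow_le_rpow_of_nonpos (by positivity) ?_ (neg_nonpos.2 hδ0.le)
      have : (l:ℝ) ≤ 2 * (j:ℝ) := by exact_mod_cast hcase
      linarith
    have h3 : ((l:ℝ) / 2) ^ (-δ) = (l:ℝ) ^ (-δ) * (2:ℝ) ^ δ := by
      rw [Real.div_rpow hlpos.le (by norm_num : (0:ℝ) ≤ 2)]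
      rw [div_eq_mul_inv, ← Real.rpow_neg (by norm_num : (0:ℝ) ≤ 2), neg_neg]
    have h4 : (2:ℝ) ^ δ ≤ 2 := by
      calc (2:ℝ) ^ δ ≤ (2:ℝ) ^ (1:ℝ) :=
            Real.rpow_le_rpow_of_exponent_le (by norm_num) hδ1.le
        _ = 2 := Real.rpow_one 2
    calc wgt δ j l ≤ ((l:ℝ) / 2) ^ (-δ) := h1.trans h2
      _ = (l:ℝ) ^ (-δ) * (2:ℝ) ^ δ := h3
      _ ≤ (l:ℝ) ^ (-δ) * 2 := mul_le_mul_of_nonneg_left h4 hrneg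
      _ = 2 * (l:ℝ) ^ (-δ) := mul_comm _ _
  · -- small j : wgt ≤ (1 - l^(-δ))^(l-j) ≤ exp(-l^(1-δ)/2) ≤ l^(-δ)
    have hrle1 : (l:ℝ) ^ (-δ) ≤ 1 :=
      Real.rpow_le_one_of_one_le_of_nonpos hl1 (neg_nonpos.2 hδ0.le)
    have hprod : ∏ i ∈ Finset.Icc (j + 1) l, alphaWt δ i
        ≤ (1 - (l:ℝ) ^ (-δ)) ^ (l - j) := by
      have hcard : (Finset.Icc (j + 1) l).card = l - j := by
        rw [Nat.card_Icc]; omega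
      rw [← hcard, ← Finset.prod_const]
      refine Finset.prod_le_prod (fun i hi => alphaWt_nonneg hδ0
        (le_trans (by omega) (Finset.mem_Icc.1 hi).1)) (fun i hi => ?_)
      obtain ⟨hi1, hi2⟩ := Finset.mem_Icc.1 hi
      have hipos : (0:ℝ) < i := by
        have : (0:ℕ) < i := by omega
        exact_mod_cast this
      have : (l:ℝ) ^ (-δ) ≤ (i:ℝ) ^ (-δ) :=
        Real.rpow_le_rpow_of_nonpos hipos (by exact_mod_cast hi2) (neg_nonpos.2 hδ0.le)
      simp only [alphaWt]
      linarith
    have hexp : (1 - (l:ℝ) ^ (-δ)) ^ (l - j) ≤ Real.exp (-((l:ℝ) ^ (1 - δ) / 2)) := by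
      have h1 : (1 - (l:ℝ) ^ (-δ)) ^ (l - j) ≤ Real.exp (-(l:ℝ) ^ (-δ)) ^ (l - j) := by
        refine pow_le_pow_left₀ (by linarith) ?_ _
        have := Real.add_one_le_exp (-(l:ℝ) ^ (-δ))
        linarith
      have h2 : Real.exp (-(l:ℝ) ^ (-δ)) ^ (l - j) = Real.exp (-((l - j : ℕ) * (l:ℝ) ^ (-δ))) := by
        rw [← Real.exp_nat_mul]
        ring_nf
      have h3 : ((l:ℝ) ^ (1 - δ) / 2) ≤ (l - j : ℕ) * (l:ℝ) ^ (-δ) := by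
        have hc : (l:ℝ) / 2 ≤ ((l - j : ℕ) : ℝ) := by
          have : l ≤ 2 * (l - j) := by omega
          have h := (Nat.cast_le (α := ℝ)).2 this
          push_cast at h ⊢
          linarith
        have h4 : (l:ℝ) ^ (1 - δ) = (l:ℝ) * (l:ℝ) ^ (-δ) := by
          rw [← Real.rpow_one_add' hlpos.le (by intro h; linarith : (1:ℝ) + -δ ≠ 0)]
          ring_nf
        rw [h4]
        calc (l:ℝ) * (l:ℝ) ^ (-δ) / 2 = ((l:ℝ) / 2) * (l:ℝ) ^ (-δ) := by ring
          _ ≤ ((l - j : ℕ) : ℝ) * (l:ℝ) ^ (-δ) := mul_le_mul_of_nonneg_right hc hrneg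
      calc (1 - (l:ℝ) ^ (-δ)) ^ (l - j)
          ≤ Real.exp (-(l:ℝ) ^ (-δ)) ^ (l - j) := h1
        _ = Real.exp (-((l - j : ℕ) * (l:ℝ) ^ (-δ))) := h2
        _ ≤ Real.exp (-((l:ℝ) ^ (1 - δ) / 2)) := by
            rw [Real.exp_le_exp]; linarith
    have hw : wgt δ j l ≤ ∏ i ∈ Finset.Icc (j + 1) l, alphaWt δ i := by
      rw [wgt]
      have hjpos : (0:ℝ) < j := by
        have : (0:ℕ) < j := by omega
        exact_mod_cast this
      have h1 : 1 - alphaWt δ j ≤ 1 := by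
        rw [one_sub_alphaWt]
        exact Real.rpow_le_one_of_one_le_of_nonpos (by exact_mod_cast hj1) (neg_nonpos.2 hδ0.le)
      have h2 : 0 ≤ ∏ i ∈ Finset.Icc (j + 1) l, alphaWt δ i :=
        Finset.prod_nonneg (fun i hi => alphaWt_nonneg hδ0
          (le_trans (by omega) (Finset.mem_Icc.1 hi).1))
      nlinarith [Real.rpow_nonneg hjpos.le (-δ), one_sub_alphaWt δ j]
    calc wgt δ j l ≤ (1 - (l:ℝ) ^ (-δ)) ^ (l - j) := hw.trans hprod
      _ ≤ Real.exp (-((l:ℝ) ^ (1 - δ) / 2)) := hexp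
      _ ≤ (l:ℝ) ^ (-δ) := hkey
      _ ≤ 2 * (l:ℝ) ^ (-δ) := by linarith

/-- Let `0 < δ < 1` and let `W_1, …, W_l` be independent random variables with
`0 ≤ W_j ≤ 1`. Define `Y_0 = 0`, `Y_i = α_i Y_{i−1} + (1−α_i) W_i`, and `ν_l = E Y_l`.
Then there is a constant `L0` (depending only on `δ`) such that for all `l ≥ L0` and
every `ε > 0`, `P(|Y_l − ν_l| ≥ ε·ν_l) ≤ 2·exp(−ε² ν_l² l^δ/(5(log l)²))`. -/
theorem running_average_concentration (δ : ℝ) (hδ0 : 0 < δ) (hδ1 : δ < 1) :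
    ∃ L0 : ℕ, ∀ (Ω : Type) (_ : MeasureSpace Ω),
      IsProbabilityMeasure (ℙ : Measure Ω) →
      ∀ (W : ℕ → Ω → ℝ), (∀ j, Measurable (W j)) →
      (∀ j, ∀ ω, 0 ≤ W j ω ∧ W j ω ≤ 1) →
      iIndepFun W ℙ →
      ∀ (Y : ℕ → Ω → ℝ), (∀ ω, Y 0 ω = 0) →
      (∀ i : ℕ, 1 ≤ i → ∀ ω,
        Y i ω = alphaWt δ i * Y (i - 1) ω + (1 - alphaWt δ i) * W i ω) →
      ∀ l : ℕ, L0 ≤ l → ∀ ε : ℝ, 0 < ε →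
        ℙ {ω | ε * 𝔼[Y l] ≤ |Y l ω - 𝔼[Y l]|}
          ≤ ENNReal.ofReal
              (2 * Real.exp (-(ε ^ 2 * (𝔼[Y l]) ^ 2 * (l : ℝ) ^ δ
                  / (5 * (Real.log l) ^ 2)))) := by
  obtain ⟨L0, hL03, hL0⟩ := wgt_le δ hδ0 hδ1
  refine ⟨L0, ?_⟩
  intro Ω _ hprob W hWm hWb hind Y hY0 hYrec l hl ε hε
  haveI := hprob
  -- representation of Y as a weighted sum
  have hrep : ∀ i ω, Y i ω = ∑ j ∈ Finset.Icc 1 i, wgt δ j i * W j ω := by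
    intro i
    induction i with
    | zero => intro ω; simp [hY0 ω]
    | succ i ih =>
      intro ω
      rw [hYrec (i + 1) (by omega) ω]
      simp only [Nat.add_sub_cancel]
      rw [ih ω, wgt_step δ (fun j => W j ω) i]
  have hYl : Y l = fun ω => ∑ j ∈ Finset.Icc 1 l, wgt δ j l * W j ω :=
    funext fun ω => hrep l ω
  simp only [hYl]
  set ν : ℝ := ∫ ω', ∑ j ∈ Finset.Icc 1 l, wgt δ j l * W j ω' with hν_def
  -- basic facts about l
  have hl3 : 3 ≤ l := le_trans hL03 hl
  have hlpos : (0:ℝ) < l := by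
    have : (0:ℕ) < l := by omega
    exact_mod_cast this
  have hl1 : (1:ℝ) ≤ l := by
    have : (1:ℕ) ≤ l := by omega
    exact_mod_cast this
  have hlog1 : 1 ≤ Real.log l := by
    rw [Real.le_log_iff_exp_le hlpos]
    calc Real.exp 1 ≤ 2.7182818286 := Real.exp_one_lt_d9.le
      _ ≤ (3:ℝ) := by norm_num
      _ ≤ (l:ℝ) := by exact_mod_cast hl3
  have hlδpos : (0:ℝ) < (l:ℝ) ^ δ := Real.rpow_pos_of_pos hlpos δ
  -- nonnegativity of weights
  have hθ : ∀ j, 0 ≤ wgt δ j l := by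
    intro j
    match j with
    | 0 =>
      have h0 : ((0:ℕ):ℝ) ^ (-δ) = 0 := by
        rw [Nat.cast_zero]
        exact Real.zero_rpow (neg_ne_zero.2 hδ0.ne')
      rw [wgt, one_sub_alphaWt, h0, zero_mul]
    | (j + 1) => exact wgt_nonneg hδ0 (by omega) l
  -- nonnegativity of the mean
  have hν0 : 0 ≤ ν := by
    refine integral_nonneg fun ω => ?_
    exact Finset.sum_nonneg fun j _ => mul_nonneg (hθ j) (hWb j ω).1
  -- variance proxy
  set V : ℝ := 5 * (Real.log l) ^ 2 / (2 * (l:ℝ) ^ δ) with hV_def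
  have hV : 0 < V := div_pos (by nlinarith) (by positivity)
  have hVs : ∑ j ∈ Finset.Icc 1 l, (wgt δ j l) ^ 2 ≤ V := by
    have h1 : ∑ j ∈ Finset.Icc 1 l, (wgt δ j l) ^ 2
        ≤ ∑ j ∈ Finset.Icc 1 l, (2 * (l:ℝ) ^ (-δ)) * wgt δ j l := by
      refine Finset.sum_le_sum fun j hj => ?_
      have := hL0 l hl j hj
      have h0 := hθ j
      nlinarith
    have h2 : ∑ j ∈ Finset.Icc 1 l, (2 * (l:ℝ) ^ (-δ)) * wgt δ j l
        ≤ 2 * (l:ℝ) ^ (-δ) := by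
      rw [← Finset.mul_sum]
      have hs := sum_wgt_le_one hδ0 l
      have hpos : (0:ℝ) ≤ 2 * (l:ℝ) ^ (-δ) := by positivity
      nlinarith
    have h3 : 2 * (l:ℝ) ^ (-δ) ≤ V := by
      rw [hV_def, Real.rpow_neg hlpos.le, le_div_iff₀ (by positivity)]
      have h4 : 2 * ((l:ℝ) ^ δ)⁻¹ * (2 * (l:ℝ) ^ δ) = 4 := by
        field_simp
        ring
      rw [h4]
      nlinarith
    linarith [h1, h2, h3]
  -- apply the concentration lemma
  have H := weighted_sum_concentration W hWm hWb hind (Finset.Icc 1 l)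
    (fun j => wgt δ j l) hθ V hV hVs (ε * ν) (mul_nonneg hε.le hν0)
  have hlogne : Real.log l ≠ 0 := by nlinarith
  have hre : -(ε ^ 2 * ν ^ 2 * (l : ℝ) ^ δ / (5 * (Real.log l) ^ 2))
      = -((ε * ν) ^ 2 / (2 * V)) := by
    rw [hV_def]
    field_simp
  rw [hre]
  exact H
end
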